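/- Let A be a 6-by-6 reciprocal matrix. There exist real numbers X₁, X₂, X₃, c₁, c₂, c₃ such that det(Re(e^{iθ}A) − λI₆) = ∏_{j=1}^{3} (λ² − (X_j²cos²θ + c_j²)) for all θ, λ ∈ ℝ (i.e., the Kippenhahn curve of A consists of three concentric ellipses centered at the origin) if and only if the following three equations hold: 2ξ₁² + 4ξ₂ξ₁ − 2ξ₃ξ₁ − 3ξ₄ξ₁ − 3ξ₅ξ₁ + ξ₂² + ξ₄² + 2ξ₅² + 2ξ₂ξ₃ − 5ξ₂ξ₄ + 2ξ₃ξ₄ − 3ξ₂ξ₅ − 2ξ₃ξ₅ + 4ξ₄ξ₅ = 0; 2ξ₁² + ξ₂ξ₁ − 3ξ₃ξ₁ + ξ₄ξ₁ − 3ξ₅ξ₁ − ξ₂² + ξ₃² − ξ₄² + 2ξ₅² + 2ξ₂ξ₃ − 2ξ₂ξ₄ + 2ξ₃ξ₄ + ξ₂ξ₅ − 3ξ₃ξ₅ + ξ₄ξ₅ = 0; ξ₁³ + 2ξ₂ξ₁² + 4ξ₃ξ₁² + 2ξ₄ξ₁² + 3ξ₅ξ₁² − ξ₂²ξ₁ +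 3ξ₃²ξ₁ − ξ₄²ξ₁ + 3ξ₅²ξ₁ + 3ξ₂ξ₃ξ₁ − 2ξ₂ξ₄ξ₁ + 3ξ₃ξ₄ξ₁ + 4ξ₂ξ₅ξ₁ − 41ξ₃ξ₅ξ₁ + 4ξ₄ξ₅ξ₁ − ξ₂³ − ξ₃³ − ξ₄³ + ξ₅³ + 2ξ₂ξ₃² − 3ξ₂ξ₄² + ξ₃ξ₄² + 2ξ₂ξ₅² + 4ξ₃ξ₅² + 2ξ₄ξ₅² + ξ₂²ξ₃ − 3ξ₂²ξ₄ + 2ξ₃²ξ₄ + 2ξ₂ξ₃ξ₄ − ξ₂²ξ₅ + 3ξ₃²ξ₅ − ξ₄²ξ₅ + 3ξ₂ξ₃ξ₅ − 2ξ₂ξ₄ξ₅ + 3ξ₃ξ₄ξ₅ = 0. -/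

import Mathlib

set_option maxRecDepth 16000
set_option maxHeartbeats 2000000

open Matrix Polynomial

/-- A tridiagonal complex matrix with zero main diagonal whose symmetric
off-diagonal entries have pairwise products equal to one. -/
def IsReciprocal {n : ℕ} (A : Matrix (Fin n) (Fin n) ℂ) : Prop :=
  (∀ i j : Fin n, ((i : ℤ) - (j : ℤ)) ^ 2 ≠ 1 → A i j = 0) ∧
  ∀ i j : Fin n, (j : ℕ) = (i : ℕ) + 1 → A i j * A j i = 1

/-- The Hermitian matrix `Re (e^{iθ} A) = (e^{iθ}A + (e^{iθ}A)*)/2`. -/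
noncomputable def RePart {n : ℕ} (θ : ℝ) (A : Matrix (Fin n) (Fin n) ℂ) :
    Matrix (Fin n) (Fin n) ℂ :=
  (2 : ℂ)⁻¹ • (Complex.exp (θ * Complex.I) • A + (Complex.exp (θ * Complex.I) • A)ᴴ)

private lemma det_tridiag6 (z u1 u2 u3 u4 u5 l1 l2 l3 l4 l5 : ℂ) :
    Matrix.det !![-z, u1, 0, 0, 0, 0;
                  l1, -z, u2, 0, 0, 0;
                  0, l2, -z, u3, 0, 0;
                  0, 0, l3, -z, u4, 0;
                  0, 0, 0, l4, -z, u5;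
                  0, 0, 0, 0, l5, -z] =
      z^6 - (u1*l1 + u2*l2 + u3*l3 + u4*l4 + u5*l5)*z^4
        + (u1*l1*(u3*l3) + u1*l1*(u4*l4) + u1*l1*(u5*l5) + u2*l2*(u4*l4)
            + u2*l2*(u5*l5) + u3*l3*(u5*l5))*z^2
        - u1*l1*(u3*l3)*(u5*l5) := by
  simp (config := { decide := true }) [Matrix.det_succ_row_zero, Fin.sum_univ_succ,
    Fin.succAbove, Matrix.cons_val_succ]
  ring

private lemma croot : 8*(Real.cos (Real.pi/7))^3 - 4*(Real.cos (Real.pi/7))^2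
    - 4*(Real.cos (Real.pi/7)) + 1 = 0 := by
  set x : ℝ := Real.pi/7 with hx
  set c : ℝ := Real.cos x with hcdef
  have hprod : Real.sin (4*x) * Real.sin (3*x) = (Real.cos x - Real.cos (7*x))/2 := by
    have h := Real.cos_sub_cos x (7*x)
    rw [show (x + 7*x)/2 = 4*x by ring, show (x - 7*x)/2 = -(3*x) by ring,
      Real.sin_neg] at h
    linarith
  have hadd : Real.cos (7*x) = Real.cos (4*x) * Real.cos (3*x)
      - Real.sin (4*x) * Real.sin (3*x) := by
    rw [show (7:ℝ)*x = 4*x + 3*x by ring]; exact Real.cos_add _ _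
  have h7 : Real.cos (7*x) = 2 * Real.cos (4*x) * Real.cos (3*x) - Real.cos x := by
    rw [hprod] at hadd; linarith
  have hc3 : Real.cos (3*x) = 4*c^3 - 3*c := Real.cos_three_mul x
  have hc4 : Real.cos (4*x) = 8*c^4 - 8*c^2 + 1 := by
    rw [show (4:ℝ)*x = 2*(2*x) by ring, Real.cos_two_mul, Real.cos_two_mul]; ring
  have hpi : Real.cos (7*x) = -1 := by
    rw [show (7:ℝ)*x = Real.pi by rw [hx]; ring, Real.cos_pi]
  have hkey : 64*c^7 - 112*c^5 + 56*c^3 - 7*c + 1 = 0 := by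
    rw [hpi, hc3, hc4] at h7; linarith [h7]
  have hfact : (c+1) * (8*c^3 - 4*c^2 - 4*c + 1)^2 = 0 := by linear_combination hkey
  have hcpos : 0 < c + 1 := by
    have : 0 < Real.cos x := Real.cos_pos_of_mem_Ioo
      ⟨by rw [hx]; nlinarith [Real.pi_pos], by rw [hx]; nlinarith [Real.pi_pos]⟩
    linarith
  rcases mul_eq_zero.mp hfact with h | h
  · linarith
  · exact pow_eq_zero_iff (by norm_num) |>.mp h

private lemma entry_prod (θ ξ : ℝ) (a b : ℂ) (hab : a * b = 1)
    (hξ : ξ = (‖a‖ - ‖b‖)^2/4) :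
    ((2:ℂ)⁻¹ * (Complex.exp (θ*Complex.I) * a + (starRingEnd ℂ) (Complex.exp (θ*Complex.I) * b))) *
    ((2:ℂ)⁻¹ * (Complex.exp (θ*Complex.I) * b + (starRingEnd ℂ) (Complex.exp (θ*Complex.I) * a))) =
    ((Real.cos θ^2 + ξ : ℝ) : ℂ) := by
  have habs : ‖a‖ * ‖b‖ = 1 := by
    rw [← norm_mul, hab, norm_one]
  have hξ' : ((‖a‖)^2 + (‖b‖)^2 : ℝ) = 4*ξ + 2 := by
    linear_combination (-4:ℝ)*hξ + 2*habs
  have hconj : (starRingEnd ℂ) (Complex.exp (θ*Complex.I)) = Complex.exp (-(θ*Complex.I)) := by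
    rw [← Complex.exp_conj]; congr 1
    simp [Complex.conj_ofReal]
  have h1 : Complex.exp (θ*Complex.I) * Complex.exp (-(θ*Complex.I)) = 1 := by
    rw [← Complex.exp_add]; simp
  have h2 : Complex.exp (θ*Complex.I)^2 + Complex.exp (-(θ*Complex.I))^2
      = ((4*Real.cos θ^2 - 2 : ℝ) : ℂ) := by
    have e1 : Complex.exp (θ*Complex.I)^2 = Complex.exp (((2*θ:ℝ):ℂ)*Complex.I) := by
      rw [sq, ← Complex.exp_add]; push_cast; ring_nf
    have e2 : Complex.exp (-(θ*Complex.I))^2 = Complex.exp (-(((2*θ:ℝ):ℂ)*Complex.I)) := by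
      rw [sq, ← Complex.exp_add]; push_cast; ring_nf
    rw [e1, e2, ← neg_mul, ← Complex.two_cos, ← Complex.ofReal_cos, Real.cos_two_mul]
    push_cast; ring
  have hma : a * (starRingEnd ℂ) a = (((‖a‖)^2 : ℝ) : ℂ) := by
    rw [Complex.mul_conj]; norm_cast; rw [Complex.sq_norm]
  have hmb : b * (starRingEnd ℂ) b = (((‖b‖)^2 : ℝ) : ℂ) := by
    rw [Complex.mul_conj]; norm_cast; rw [Complex.sq_norm]
  have hcc : (starRingEnd ℂ) a * (starRingEnd ℂ) b = 1 := by
    rw [← _root_.map_mul, hab, _root_.map_one]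
  rw [_root_.map_mul, _root_.map_mul, hconj]
  have hξc : (((‖a‖)^2 : ℝ) : ℂ) + (((‖b‖)^2:ℝ):ℂ) = ((4*ξ+2 : ℝ):ℂ) := by
    exact_mod_cast congrArg (Complex.ofReal) hξ'
  push_cast at hξc h2 hma hmb ⊢
  linear_combination (4:ℂ)⁻¹ * (Complex.exp (θ*Complex.I))^2 * hab
    + (4:ℂ)⁻¹ * (Complex.exp (-(θ*Complex.I)))^2 * hcc
    + (4:ℂ)⁻¹ * (a * (starRingEnd ℂ) a + b * (starRingEnd ℂ) b) * h1
    + (4:ℂ)⁻¹ * hma + (4:ℂ)⁻¹ * hmb + (4:ℂ)⁻¹ * h2 + (4:ℂ)⁻¹ * hξc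

private lemma nonneg3 (u v w : ℝ) (h1 : 0 ≤ u+v+w) (h2 : 0 ≤ u*v+u*w+v*w)
    (h3 : 0 ≤ u*v*w) : 0 ≤ u ∧ 0 ≤ v ∧ 0 ≤ w := by
  have key : ∀ a b c : ℝ, 0 ≤ a+b+c → 0 ≤ a*b+a*c+b*c → 0 ≤ a*b*c → 0 ≤ a := by
    intro a b c g1 g2 g3
    by_contra hn
    push_neg at hn
    nlinarith [mul_nonneg g1 (sq_nonneg a), mul_nonneg g2 (neg_nonneg.mpr hn.le),
      mul_pos (mul_pos (neg_pos.mpr hn) (neg_pos.mpr hn)) (neg_pos.mpr hn)]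
  exact ⟨key u v w h1 h2 h3, key v u w (by linarith) (by nlinarith [h2]) (by nlinarith [h3]),
    key w u v (by linarith) (by nlinarith [h2]) (by nlinarith [h3])⟩

private lemma forward_core (cs ξ₁ ξ₂ ξ₃ ξ₄ ξ₅ y₁ y₂ y₃ : ℝ)
    (hc : 8*cs^3 - 4*cs^2 - 4*cs + 1 = 0)
    (hE2 : y₁ + y₂ + y₃ = ξ₁+ξ₂+ξ₃+ξ₄+ξ₅)
    (hE4 : (4*cs^2)*(y₂+y₃) + (4*(4*cs^3-3*cs)^2)*(y₁+y₃) + (4*(16*cs^5-20*cs^3+5*cs)^2)*(y₁+y₂) = 3*ξ₁+2*ξ₂+2*ξ₃+2*ξ₄+3*ξ₅)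
    (hE5 : y₁*y₂ + y₁*y₃ + y₂*y₃ = ξ₁*ξ₃+ξ₁*ξ₄+ξ₁*ξ₅+ξ₂*ξ₄+ξ₂*ξ₅+ξ₃*ξ₅)
    (hE7 : (4*cs^2)*(4*(4*cs^3-3*cs)^2)*y₃ + (4*cs^2)*(4*(16*cs^5-20*cs^3+5*cs)^2)*y₂ + (4*(4*cs^3-3*cs)^2)*(4*(16*cs^5-20*cs^3+5*cs)^2)*y₁ = ξ₁+ξ₃+ξ₅)
    (hE8 : (4*cs^2)*y₂*y₃ + (4*(4*cs^3-3*cs)^2)*y₁*y₃ + (4*(16*cs^5-20*cs^3+5*cs)^2)*y₁*y₂ = ξ₁*ξ₃+ξ₁*ξ₅+ξ₃*ξ₅)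
    (hE9 : y₁*y₂*y₃ = ξ₁*ξ₃*ξ₅) :
    (2 * ξ₁ ^ 2 + 4 * ξ₂ * ξ₁ - 2 * ξ₃ * ξ₁ - 3 * ξ₄ * ξ₁ - 3 * ξ₅ * ξ₁ + ξ₂ ^ 2 + ξ₄ ^ 2 + 2 * ξ₅ ^ 2 + 2 * ξ₂ * ξ₃ - 5 * ξ₂ * ξ₄ + 2 * ξ₃ * ξ₄ - 3 * ξ₂ * ξ₅ - 2 * ξ₃ * ξ₅ + 4 * ξ₄ * ξ₅ = 0) ∧ (2 * ξ₁ ^ 2 + ξ₂ * ξ₁ - 3 * ξ₃ * ξ₁ + ξ₄ * ξ₁ - 3 * ξ₅ * ξ₁ - ξ₂ ^ 2 + ξ₃ ^ 2 - ξ₄ ^ 2 + 2 * ξ₅ ^ 2 + 2 * ξ₂ * ξ₃ - 2 * ξ₂ * ξ₄ + 2 * ξ₃ * ξ₄ + ξ₂ * ξ₅ - 3 * ξ₃ * ξ₅ + ξ₄ * ξ₅ = 0) ∧ (ξ₁ ^ 3 + 2 * ξ₂ * ξ₁ ^ 2 + 4 * ξ₃ * ξ₁ ^ 2 + 2 * ξ₄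 * ξ₁ ^ 2 + 3 * ξ₅ * ξ₁ ^ 2 - ξ₂ ^ 2 * ξ₁ + 3 * ξ₃ ^ 2 * ξ₁ - ξ₄ ^ 2 * ξ₁ + 3 * ξ₅ ^ 2 * ξ₁ + 3 * ξ₂ * ξ₃ * ξ₁ - 2 * ξ₂ * ξ₄ * ξ₁ + 3 * ξ₃ * ξ₄ * ξ₁ + 4 * ξ₂ * ξ₅ * ξ₁ - 41 * ξ₃ * ξ₅ * ξ₁ + 4 * ξ₄ * ξ₅ * ξ₁ - ξ₂ ^ 3 - ξ₃ ^ 3 - ξ₄ ^ 3 + ξ₅ ^ 3 + 2 * ξ₂ * ξ₃ ^ 2 - 3 * ξ₂ * ξ₄ ^ 2 + ξ₃ * ξ₄ ^ 2 + 2 * ξ₂ * ξ₅ ^ 2 + 4 * ξ₃ * ξ₅ ^ 2 + 2 * ξ₄ * ξ₅ ^ 2 + ξ₂ ^ 2 * ξ₃ - 3 * ξ₂ ^ 2 * ξ₄ + 2 * ξ₃ ^ 2 * ξ₄ + 2 * ξ₂ * ξ₃ * ξ₄ - ξ₂ ^ 2 * ξ₅ + 3 * ξ₃ ^ 2 * ξ₅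 - ξ₄ ^ 2 * ξ₅ + 3 * ξ₂ * ξ₃ * ξ₅ - 2 * ξ₂ * ξ₄ * ξ₅ + 3 * ξ₃ * ξ₄ * ξ₅ = 0) := by
  have ha : y₁ = ((1/7:ℝ)*ξ₅ + (-1/7:ℝ)*ξ₄ + (-1/7:ℝ)*ξ₂ + (1/7:ℝ)*ξ₁ + (-2/7:ℝ)*cs*ξ₅ + (4/7:ℝ)*cs*ξ₃ + (-2/7:ℝ)*cs*ξ₁ + (4/7:ℝ)*cs^2*ξ₅ + (8/7:ℝ)*cs^2*ξ₄ + (4/7:ℝ)*cs^2*ξ₃ + (8/7:ℝ)*cs^2*ξ₂ + (4/7:ℝ)*cs^2*ξ₁) := by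
    linear_combination ((-3/7:ℝ) + (12/7:ℝ)*cs + (8/7:ℝ)*cs^2) * hE2 + ((1/7:ℝ) + (-6/7:ℝ)*cs) * hE4 + ((1/7:ℝ) + (4/7:ℝ)*cs + (-4/7:ℝ)*cs^2) * hE7 + ((3/7:ℝ)*y₃ + (3/7:ℝ)*y₂ + (10/7:ℝ)*y₁ + (4:ℝ)*cs*y₁ + (-36/7:ℝ)*cs^2*y₃ + (-100/7:ℝ)*cs^2*y₂ + (8/7:ℝ)*cs^2*y₁ + (72/7:ℝ)*cs^3*y₃ + (200/7:ℝ)*cs^3*y₂ + (880/7:ℝ)*cs^3*y₁ + (96/7:ℝ)*cs^4*y₃ + (800/7:ℝ)*cs^4*y₂ + (624/7:ℝ)*cs^4*y₁ + (-192/7:ℝ)*cs^5*y₃ + (-1600/7:ℝ)*cs^5*y₂ + (-13824/7:ℝ)*cs^5*y₁ + (-64/7:ℝ)*cs^6*y₃ + (-320:ℝ)*cs^6*y₂ + (-9344/7:ℝ)*cs^6*y₁ + (128/7:ℝ)*cs^7*y₃ + (640:ℝ)*cs^7*y₂ + (69760/7:ℝ)*cs^7*y₁ + (2560/7:ℝ)*cs^8*y₂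 + (37376/7:ℝ)*cs^8*y₁ + (-5120/7:ℝ)*cs^9*y₂ + (-167424/7:ℝ)*cs^9*y₁ + (-1024/7:ℝ)*cs^10*y₂ + (-65536/7:ℝ)*cs^10*y₁ + (2048/7:ℝ)*cs^11*y₂ + (208896/7:ℝ)*cs^11*y₁ + (53248/7:ℝ)*cs^12*y₁ + (-131072/7:ℝ)*cs^13*y₁ + (-16384/7:ℝ)*cs^14*y₁ + (32768/7:ℝ)*cs^15*y₁) * hc
  have hb : y₂ = ((4/7:ℝ)*ξ₅ + (3/7:ℝ)*ξ₄ + (3/7:ℝ)*ξ₂ + (4/7:ℝ)*ξ₁ + (-4/7:ℝ)*cs*ξ₄ + (-6/7:ℝ)*cs*ξ₃ + (-4/7:ℝ)*cs*ξ₂ + (-4/7:ℝ)*cs^2*ξ₅ + (8/7:ℝ)*cs^2*ξ₃ + (-4/7:ℝ)*cs^2*ξ₁) := by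
    linear_combination ((-5/7:ℝ) + (-16/7:ℝ)*cs + (24/7:ℝ)*cs^2) * hE2 + ((4/7:ℝ) + (6/7:ℝ)*cs + (-12/7:ℝ)*cs^2) * hE4 + ((-3/7:ℝ) + (-2/7:ℝ)*cs + (8/7:ℝ)*cs^2) * hE7 + ((5/7:ℝ)*y₃ + (12/7:ℝ)*y₂ + (5/7:ℝ)*y₁ + (36/7:ℝ)*cs*y₃ + (64/7:ℝ)*cs*y₂ + (36/7:ℝ)*cs*y₁ + (-20/7:ℝ)*cs^2*y₃ + (-136/7:ℝ)*cs^2*y₂ + (-404/7:ℝ)*cs^2*y₁ + (-216/7:ℝ)*cs^3*y₃ + (-144:ℝ)*cs^3*y₂ + (-2328/7:ℝ)*cs^3*y₁ + (64/7:ℝ)*cs^4*y₃ + (80:ℝ)*cs^4*y₂ + (4800/7:ℝ)*cs^4*y₁ + (416/7:ℝ)*cs^5*y₃ + (4896/7:ℝ)*cs^5*y₂ + (25696/7:ℝ)*cs^5*y₁ + (-64/7:ℝ)*cs^6*y₃ + (-1472/7:ℝ)*cs^6*y₂ + (-23360/7:ℝ)*cs^6*y₁ + (-256/7:ℝ)*cs^7*y₃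 + (-10624/7:ℝ)*cs^7*y₂ + (-119680/7:ℝ)*cs^7*y₁ + (2048/7:ℝ)*cs^8*y₂ + (58880/7:ℝ)*cs^8*y₁ + (1536:ℝ)*cs^9*y₂ + (40960:ℝ)*cs^9*y₁ + (-1024/7:ℝ)*cs^10*y₂ + (-80896/7:ℝ)*cs^10*y₁ + (-4096/7:ℝ)*cs^11*y₂ + (-370688/7:ℝ)*cs^11*y₁ + (8192:ℝ)*cs^12*y₁ + (245760/7:ℝ)*cs^13*y₁ + (-16384/7:ℝ)*cs^14*y₁ + (-65536/7:ℝ)*cs^15*y₁) * hc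
  have hd : y₃ = ((2/7:ℝ)*ξ₅ + (5/7:ℝ)*ξ₄ + ξ₃ + (5/7:ℝ)*ξ₂ + (2/7:ℝ)*ξ₁ + (2/7:ℝ)*cs*ξ₅ + (4/7:ℝ)*cs*ξ₄ + (2/7:ℝ)*cs*ξ₃ + (4/7:ℝ)*cs*ξ₂ + (2/7:ℝ)*cs*ξ₁ + (-8/7:ℝ)*cs^2*ξ₄ + (-12/7:ℝ)*cs^2*ξ₃ + (-8/7:ℝ)*cs^2*ξ₂) := by
    linear_combination ((15/7:ℝ) + (4/7:ℝ)*cs + (-32/7:ℝ)*cs^2) * hE2 + ((-5/7:ℝ) + (12/7:ℝ)*cs^2) * hE4 + ((2/7:ℝ) + (-2/7:ℝ)*cs + (-4/7:ℝ)*cs^2) * hE7 + ((-8/7:ℝ)*y₃ + (-15/7:ℝ)*y₂ + (-15/7:ℝ)*y₁ + (-36/7:ℝ)*cs*y₃ + (-64/7:ℝ)*cs*y₂ + (-64/7:ℝ)*cs*y₁ + (8:ℝ)*cs^2*y₃ + (236/7:ℝ)*cs^2*y₂ + (396/7:ℝ)*cs^2*y₁ + (144/7:ℝ)*cs^3*y₃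 + (808/7:ℝ)*cs^3*y₂ + (1448/7:ℝ)*cs^3*y₁ + (-160/7:ℝ)*cs^4*y₃ + (-1360/7:ℝ)*cs^4*y₂ + (-5424/7:ℝ)*cs^4*y₁ + (-32:ℝ)*cs^5*y₃ + (-3296/7:ℝ)*cs^5*y₂ + (-1696:ℝ)*cs^5*y₁ + (128/7:ℝ)*cs^6*y₃ + (3712/7:ℝ)*cs^6*y₂ + (4672:ℝ)*cs^6*y₁ + (128/7:ℝ)*cs^7*y₃ + (6144/7:ℝ)*cs^7*y₂ + (49920/7:ℝ)*cs^7*y₁ + (-4608/7:ℝ)*cs^8*y₂ + (-96256/7:ℝ)*cs^8*y₁ + (-5632/7:ℝ)*cs^9*y₂ + (-119296/7:ℝ)*cs^9*y₁ + (2048/7:ℝ)*cs^10*y₂ + (146432/7:ℝ)*cs^10*y₁ + (2048/7:ℝ)*cs^11*y₂ + (161792/7:ℝ)*cs^11*y₁ + (-110592/7:ℝ)*cs^12*y₁ + (-16384:ℝ)*cs^13*y₁ + (32768/7:ℝ)*cs^14*y₁ + (32768/7:ℝ)*cs^15*y₁) * hc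
  refine ⟨?_, ?_, ?_⟩
  · linear_combination (7:ℝ) * hE5 + ((-7:ℝ)*y₃ + (-7:ℝ)*y₂) * ha + ((-7:ℝ)*y₃ + (-1:ℝ)*ξ₅ + ξ₄ + ξ₂ + (-1:ℝ)*ξ₁ + (2:ℝ)*cs*ξ₅ + (-4:ℝ)*cs*ξ₃ + (2:ℝ)*cs*ξ₁ + (-4:ℝ)*cs^2*ξ₅ + (-8:ℝ)*cs^2*ξ₄ + (-4:ℝ)*cs^2*ξ₃ + (-8:ℝ)*cs^2*ξ₂ + (-4:ℝ)*cs^2*ξ₁) * hb + ((-5:ℝ)*ξ₅ + (-2:ℝ)*ξ₄ + (-2:ℝ)*ξ₂ + (-5:ℝ)*ξ₁ + (2:ℝ)*cs*ξ₅ + (4:ℝ)*cs*ξ₄ + (2:ℝ)*cs*ξ₃ + (4:ℝ)*cs*ξ₂ + (2:ℝ)*cs*ξ₁ + (-8:ℝ)*cs^2*ξ₄ + (-12:ℝ)*cs^2*ξ₃ + (-8:ℝ)*cs^2*ξ₂) * hd + ((2/7:ℝ)*cs*ξ₅^2 + (4/7:ℝ)*cs*ξ₄*ξ₅ + (8/7:ℝ)*cs*ξ₄^2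 + (-2/7:ℝ)*cs*ξ₃*ξ₅ + (16/7:ℝ)*cs*ξ₃*ξ₄ + (2:ℝ)*cs*ξ₃^2 + (4/7:ℝ)*cs*ξ₂*ξ₅ + (16/7:ℝ)*cs*ξ₂*ξ₄ + (16/7:ℝ)*cs*ξ₂*ξ₃ + (8/7:ℝ)*cs*ξ₂^2 + (4/7:ℝ)*cs*ξ₁*ξ₅ + (4/7:ℝ)*cs*ξ₁*ξ₄ + (-2/7:ℝ)*cs*ξ₁*ξ₃ + (4/7:ℝ)*cs*ξ₁*ξ₂ + (2/7:ℝ)*cs*ξ₁^2) * hc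
  · linear_combination (7:ℝ) * hE8 + ((-252:ℝ)*cs^2*y₃ + (-700:ℝ)*cs^2*y₂ + (672:ℝ)*cs^4*y₃ + (5600:ℝ)*cs^4*y₂ + (-448:ℝ)*cs^6*y₃ + (-15680:ℝ)*cs^6*y₂ + (17920:ℝ)*cs^8*y₂ + (-7168:ℝ)*cs^10*y₂) * ha + ((-28:ℝ)*cs^2*y₃ + (-100:ℝ)*cs^2*ξ₅ + (100:ℝ)*cs^2*ξ₄ + (100:ℝ)*cs^2*ξ₂ + (-100:ℝ)*cs^2*ξ₁ + (200:ℝ)*cs^3*ξ₅ + (-400:ℝ)*cs^3*ξ₃ + (200:ℝ)*cs^3*ξ₁ + (400:ℝ)*cs^4*ξ₅ + (-1600:ℝ)*cs^4*ξ₄ + (-400:ℝ)*cs^4*ξ₃ + (-1600:ℝ)*cs^4*ξ₂ + (400:ℝ)*cs^4*ξ₁ + (-1600:ℝ)*cs^5*ξ₅ + (3200:ℝ)*cs^5*ξ₃ + (-1600:ℝ)*cs^5*ξ₁ + (960:ℝ)*cs^6*ξ₅ + (8640:ℝ)*cs^6*ξ₄ + (3200:ℝ)*cs^6*ξ₃ +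 (8640:ℝ)*cs^6*ξ₂ + (960:ℝ)*cs^6*ξ₁ + (4480:ℝ)*cs^7*ξ₅ + (-8960:ℝ)*cs^7*ξ₃ + (4480:ℝ)*cs^7*ξ₁ + (-6400:ℝ)*cs^8*ξ₅ + (-20480:ℝ)*cs^8*ξ₄ + (-8960:ℝ)*cs^8*ξ₃ + (-20480:ℝ)*cs^8*ξ₂ + (-6400:ℝ)*cs^8*ξ₁ + (-5120:ℝ)*cs^9*ξ₅ + (10240:ℝ)*cs^9*ξ₃ + (-5120:ℝ)*cs^9*ξ₁ + (9216:ℝ)*cs^10*ξ₅ + (21504:ℝ)*cs^10*ξ₄ + (10240:ℝ)*cs^10*ξ₃ + (21504:ℝ)*cs^10*ξ₂ + (9216:ℝ)*cs^10*ξ₁ + (2048:ℝ)*cs^11*ξ₅ + (-4096:ℝ)*cs^11*ξ₃ + (2048:ℝ)*cs^11*ξ₁ + (-4096:ℝ)*cs^12*ξ₅ + (-8192:ℝ)*cs^12*ξ₄ + (-4096:ℝ)*cs^12*ξ₃ + (-8192:ℝ)*cs^12*ξ₂ + (-4096:ℝ)*cs^12*ξ₁) * hb + ((-52:ℝ)*cs^2*ξ₅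 + (24:ℝ)*cs^2*ξ₄ + (24:ℝ)*cs^2*ξ₂ + (-52:ℝ)*cs^2*ξ₁ + (72:ℝ)*cs^3*ξ₅ + (16:ℝ)*cs^3*ξ₄ + (-120:ℝ)*cs^3*ξ₃ + (16:ℝ)*cs^3*ξ₂ + (72:ℝ)*cs^3*ξ₁ + (-32:ℝ)*cs^4*ξ₅ + (-384:ℝ)*cs^4*ξ₄ + (-176:ℝ)*cs^4*ξ₃ + (-384:ℝ)*cs^4*ξ₂ + (-32:ℝ)*cs^4*ξ₁ + (-192:ℝ)*cs^5*ξ₅ + (384:ℝ)*cs^5*ξ₃ + (-192:ℝ)*cs^5*ξ₁ + (320:ℝ)*cs^6*ξ₅ + (832:ℝ)*cs^6*ξ₄ + (384:ℝ)*cs^6*ξ₃ + (832:ℝ)*cs^6*ξ₂ + (320:ℝ)*cs^6*ξ₁ + (128:ℝ)*cs^7*ξ₅ + (-256:ℝ)*cs^7*ξ₃ + (128:ℝ)*cs^7*ξ₁ + (-256:ℝ)*cs^8*ξ₅ + (-512:ℝ)*cs^8*ξ₄ + (-256:ℝ)*cs^8*ξ₃ + (-512:ℝ)*cs^8*ξ₂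 + (-256:ℝ)*cs^8*ξ₁) * hd + ((2:ℝ)*ξ₅^2 + ξ₄*ξ₅ + (-1:ℝ)*ξ₄^2 + (4:ℝ)*ξ₃*ξ₅ + (2:ℝ)*ξ₃*ξ₄ + ξ₃^2 + ξ₂*ξ₅ + (-2:ℝ)*ξ₂*ξ₄ + (2:ℝ)*ξ₂*ξ₃ + (-1:ℝ)*ξ₂^2 + (4:ℝ)*ξ₁*ξ₅ + ξ₁*ξ₄ + (4:ℝ)*ξ₁*ξ₃ + ξ₁*ξ₂ + (2:ℝ)*ξ₁^2 + (8:ℝ)*cs*ξ₅^2 + (4:ℝ)*cs*ξ₄*ξ₅ + (-4:ℝ)*cs*ξ₄^2 + (16:ℝ)*cs*ξ₃*ξ₅ + (8:ℝ)*cs*ξ₃*ξ₄ + (4:ℝ)*cs*ξ₃^2 + (4:ℝ)*cs*ξ₂*ξ₅ + (-8:ℝ)*cs*ξ₂*ξ₄ + (8:ℝ)*cs*ξ₂*ξ₃ + (-4:ℝ)*cs*ξ₂^2 + (16:ℝ)*cs*ξ₁*ξ₅ + (4:ℝ)*cs*ξ₁*ξ₄ + (16:ℝ)*cs*ξ₁*ξ₃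 + (4:ℝ)*cs*ξ₁*ξ₂ + (8:ℝ)*cs*ξ₁^2 + (-32:ℝ)*cs^2*ξ₅^2 + (4:ℝ)*cs^2*ξ₄*ξ₅ + (40:ℝ)*cs^2*ξ₄^2 + (28:ℝ)*cs^2*ξ₃*ξ₅ + (64:ℝ)*cs^2*ξ₃*ξ₄ + (20:ℝ)*cs^2*ξ₃^2 + (4:ℝ)*cs^2*ξ₂*ξ₅ + (80:ℝ)*cs^2*ξ₂*ξ₄ + (64:ℝ)*cs^2*ξ₂*ξ₃ + (40:ℝ)*cs^2*ξ₂^2 + (-64:ℝ)*cs^2*ξ₁*ξ₅ + (4:ℝ)*cs^2*ξ₁*ξ₄ + (28:ℝ)*cs^2*ξ₁*ξ₃ + (4:ℝ)*cs^2*ξ₁*ξ₂ + (-32:ℝ)*cs^2*ξ₁^2 + (8:ℝ)*cs^3*ξ₅^2 + (200:ℝ)*cs^3*ξ₄*ξ₅ + (120:ℝ)*cs^3*ξ₄^2 + (24:ℝ)*cs^3*ξ₃*ξ₅ + (-48:ℝ)*cs^3*ξ₃*ξ₄ + (-32:ℝ)*cs^3*ξ₃^2 + (200:ℝ)*cs^3*ξ₂*ξ₅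 + (240:ℝ)*cs^3*ξ₂*ξ₄ + (-48:ℝ)*cs^3*ξ₂*ξ₃ + (120:ℝ)*cs^3*ξ₂^2 + (16:ℝ)*cs^3*ξ₁*ξ₅ + (200:ℝ)*cs^3*ξ₁*ξ₄ + (24:ℝ)*cs^3*ξ₁*ξ₃ + (200:ℝ)*cs^3*ξ₁*ξ₂ + (8:ℝ)*cs^3*ξ₁^2 + (960/7:ℝ)*cs^4*ξ₅^2 + (-1104/7:ℝ)*cs^4*ξ₄*ξ₅ + (-2144/7:ℝ)*cs^4*ξ₄^2 + (-3088/7:ℝ)*cs^4*ξ₃*ξ₅ + (-3104/7:ℝ)*cs^4*ξ₃*ξ₄ + (368/7:ℝ)*cs^4*ξ₃^2 + (-1104/7:ℝ)*cs^4*ξ₂*ξ₅ + (-4288/7:ℝ)*cs^4*ξ₂*ξ₄ + (-3104/7:ℝ)*cs^4*ξ₂*ξ₃ + (-2144/7:ℝ)*cs^4*ξ₂^2 + (1920/7:ℝ)*cs^4*ξ₁*ξ₅ + (-1104/7:ℝ)*cs^4*ξ₁*ξ₄ + (-3088/7:ℝ)*cs^4*ξ₁*ξ₃ + (-1104/7:ℝ)*cs^4*ξ₁*ξ₂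 + (960/7:ℝ)*cs^4*ξ₁^2 + (-256:ℝ)*cs^5*ξ₅^2 + (-7872/7:ℝ)*cs^5*ξ₄*ξ₅ + (-2720/7:ℝ)*cs^5*ξ₄^2 + (-1504/7:ℝ)*cs^5*ξ₃*ξ₅ + (4672/7:ℝ)*cs^5*ξ₃*ξ₄ + (2432/7:ℝ)*cs^5*ξ₃^2 + (-7872/7:ℝ)*cs^5*ξ₂*ξ₅ + (-5440/7:ℝ)*cs^5*ξ₂*ξ₄ + (4672/7:ℝ)*cs^5*ξ₂*ξ₃ + (-2720/7:ℝ)*cs^5*ξ₂^2 + (-512:ℝ)*cs^5*ξ₁*ξ₅ + (-7872/7:ℝ)*cs^5*ξ₁*ξ₄ + (-1504/7:ℝ)*cs^5*ξ₁*ξ₃ + (-7872/7:ℝ)*cs^5*ξ₁*ξ₂ + (-256:ℝ)*cs^5*ξ₁^2 + (-1280/7:ℝ)*cs^6*ξ₅^2 + (5888/7:ℝ)*cs^6*ξ₄*ξ₅ + (6976/7:ℝ)*cs^6*ξ₄^2 + (11264/7:ℝ)*cs^6*ξ₃*ξ₅ + (8256/7:ℝ)*cs^6*ξ₃*ξ₄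 + (-3840/7:ℝ)*cs^6*ξ₃^2 + (5888/7:ℝ)*cs^6*ξ₂*ξ₅ + (13952/7:ℝ)*cs^6*ξ₂*ξ₄ + (8256/7:ℝ)*cs^6*ξ₂*ξ₃ + (6976/7:ℝ)*cs^6*ξ₂^2 + (-2560/7:ℝ)*cs^6*ξ₁*ξ₅ + (5888/7:ℝ)*cs^6*ξ₁*ξ₄ + (11264/7:ℝ)*cs^6*ξ₁*ξ₃ + (5888/7:ℝ)*cs^6*ξ₁*ξ₂ + (-1280/7:ℝ)*cs^6*ξ₁^2 + (5248/7:ℝ)*cs^7*ξ₅^2 + (15616/7:ℝ)*cs^7*ξ₄*ξ₅ + (2944/7:ℝ)*cs^7*ξ₄^2 + (640/7:ℝ)*cs^7*ξ₃*ξ₅ + (-2304:ℝ)*cs^7*ξ₃*ξ₄ + (-7808/7:ℝ)*cs^7*ξ₃^2 + (15616/7:ℝ)*cs^7*ξ₂*ξ₅ + (5888/7:ℝ)*cs^7*ξ₂*ξ₄ + (-2304:ℝ)*cs^7*ξ₂*ξ₃ + (2944/7:ℝ)*cs^7*ξ₂^2 + (10496/7:ℝ)*cs^7*ξ₁*ξ₅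 + (15616/7:ℝ)*cs^7*ξ₁*ξ₄ + (640/7:ℝ)*cs^7*ξ₁*ξ₃ + (15616/7:ℝ)*cs^7*ξ₁*ξ₂ + (5248/7:ℝ)*cs^7*ξ₁^2 + (512/7:ℝ)*cs^8*ξ₅^2 + (-1280:ℝ)*cs^8*ξ₄*ξ₅ + (-9216/7:ℝ)*cs^8*ξ₄^2 + (-14592/7:ℝ)*cs^8*ξ₃*ξ₅ + (-9728/7:ℝ)*cs^8*ξ₃*ξ₄ + (6400/7:ℝ)*cs^8*ξ₃^2 + (-1280:ℝ)*cs^8*ξ₂*ξ₅ + (-18432/7:ℝ)*cs^8*ξ₂*ξ₄ + (-9728/7:ℝ)*cs^8*ξ₂*ξ₃ + (-9216/7:ℝ)*cs^8*ξ₂^2 + (1024/7:ℝ)*cs^8*ξ₁*ξ₅ + (-1280:ℝ)*cs^8*ξ₁*ξ₄ + (-14592/7:ℝ)*cs^8*ξ₁*ξ₃ + (-1280:ℝ)*cs^8*ξ₁*ξ₂ + (512/7:ℝ)*cs^8*ξ₁^2 + (-5632/7:ℝ)*cs^9*ξ₅^2 + (-13312/7:ℝ)*cs^9*ξ₄*ξ₅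 + (-1024/7:ℝ)*cs^9*ξ₄^2 + (2560/7:ℝ)*cs^9*ξ₃*ξ₅ + (19968/7:ℝ)*cs^9*ξ₃*ξ₄ + (9728/7:ℝ)*cs^9*ξ₃^2 + (-13312/7:ℝ)*cs^9*ξ₂*ξ₅ + (-2048/7:ℝ)*cs^9*ξ₂*ξ₄ + (19968/7:ℝ)*cs^9*ξ₂*ξ₃ + (-1024/7:ℝ)*cs^9*ξ₂^2 + (-11264/7:ℝ)*cs^9*ξ₁*ξ₅ + (-13312/7:ℝ)*cs^9*ξ₁*ξ₄ + (2560/7:ℝ)*cs^9*ξ₁*ξ₃ + (-13312/7:ℝ)*cs^9*ξ₁*ξ₂ + (-5632/7:ℝ)*cs^9*ξ₁^2 + (4096/7:ℝ)*cs^10*ξ₄*ξ₅ + (4096/7:ℝ)*cs^10*ξ₄^2 + (6144/7:ℝ)*cs^10*ξ₃*ξ₅ + (4096/7:ℝ)*cs^10*ξ₃*ξ₄ + (-3072/7:ℝ)*cs^10*ξ₃^2 + (4096/7:ℝ)*cs^10*ξ₂*ξ₅ + (8192/7:ℝ)*cs^10*ξ₂*ξ₄ + (4096/7:ℝ)*cs^10*ξ₂*ξ₃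 + (4096/7:ℝ)*cs^10*ξ₂^2 + (4096/7:ℝ)*cs^10*ξ₁*ξ₄ + (6144/7:ℝ)*cs^10*ξ₁*ξ₃ + (4096/7:ℝ)*cs^10*ξ₁*ξ₂ + (2048/7:ℝ)*cs^11*ξ₅^2 + (4096/7:ℝ)*cs^11*ξ₄*ξ₅ + (-2048/7:ℝ)*cs^11*ξ₃*ξ₅ + (-8192/7:ℝ)*cs^11*ξ₃*ξ₄ + (-4096/7:ℝ)*cs^11*ξ₃^2 + (4096/7:ℝ)*cs^11*ξ₂*ξ₅ + (-8192/7:ℝ)*cs^11*ξ₂*ξ₃ + (4096/7:ℝ)*cs^11*ξ₁*ξ₅ + (4096/7:ℝ)*cs^11*ξ₁*ξ₄ + (-2048/7:ℝ)*cs^11*ξ₁*ξ₃ + (4096/7:ℝ)*cs^11*ξ₁*ξ₂ + (2048/7:ℝ)*cs^11*ξ₁^2) * hc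
  · linear_combination (49:ℝ) * hE9 + ((-49:ℝ)*y₂*y₃) * ha + ((-7:ℝ)*ξ₅*y₃ + (7:ℝ)*ξ₄*y₃ + (7:ℝ)*ξ₂*y₃ + (-7:ℝ)*ξ₁*y₃ + (14:ℝ)*cs*ξ₅*y₃ + (-28:ℝ)*cs*ξ₃*y₃ + (14:ℝ)*cs*ξ₁*y₃ + (-28:ℝ)*cs^2*ξ₅*y₃ + (-56:ℝ)*cs^2*ξ₄*y₃ + (-28:ℝ)*cs^2*ξ₃*y₃ + (-56:ℝ)*cs^2*ξ₂*y₃ + (-28:ℝ)*cs^2*ξ₁*y₃) * hb + ((-4:ℝ)*ξ₅^2 + ξ₄*ξ₅ + (3:ℝ)*ξ₄^2 + ξ₂*ξ₅ + (6:ℝ)*ξ₂*ξ₄ + (3:ℝ)*ξ₂^2 + (-8:ℝ)*ξ₁*ξ₅ + ξ₁*ξ₄ + ξ₁*ξ₂ + (-4:ℝ)*ξ₁^2 + (8:ℝ)*cs*ξ₅^2 + (10:ℝ)*cs*ξ₄*ξ₅ + (-4:ℝ)*cs*ξ₄^2 + (-10:ℝ)*cs*ξ₃*ξ₅ + (-18:ℝ)*cs*ξ₃*ξ₄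 + (10:ℝ)*cs*ξ₂*ξ₅ + (-8:ℝ)*cs*ξ₂*ξ₄ + (-18:ℝ)*cs*ξ₂*ξ₃ + (-4:ℝ)*cs*ξ₂^2 + (16:ℝ)*cs*ξ₁*ξ₅ + (10:ℝ)*cs*ξ₁*ξ₄ + (-10:ℝ)*cs*ξ₁*ξ₃ + (10:ℝ)*cs*ξ₁*ξ₂ + (8:ℝ)*cs*ξ₁^2 + (-12:ℝ)*cs^2*ξ₅^2 + (-56:ℝ)*cs^2*ξ₄*ξ₅ + (-24:ℝ)*cs^2*ξ₄^2 + (-36:ℝ)*cs^2*ξ₃*ξ₅ + (12:ℝ)*cs^2*ξ₃*ξ₄ + (24:ℝ)*cs^2*ξ₃^2 + (-56:ℝ)*cs^2*ξ₂*ξ₅ + (-48:ℝ)*cs^2*ξ₂*ξ₄ + (12:ℝ)*cs^2*ξ₂*ξ₃ + (-24:ℝ)*cs^2*ξ₂^2 + (-24:ℝ)*cs^2*ξ₁*ξ₅ + (-56:ℝ)*cs^2*ξ₁*ξ₄ + (-36:ℝ)*cs^2*ξ₁*ξ₃ + (-56:ℝ)*cs^2*ξ₁*ξ₂ + (-12:ℝ)*cs^2*ξ₁^2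 + (-8:ℝ)*cs^3*ξ₅^2 + (16:ℝ)*cs^3*ξ₄*ξ₅ + (32:ℝ)*cs^3*ξ₄^2 + (56:ℝ)*cs^3*ξ₃*ξ₅ + (64:ℝ)*cs^3*ξ₃*ξ₄ + (-8:ℝ)*cs^3*ξ₃^2 + (16:ℝ)*cs^3*ξ₂*ξ₅ + (64:ℝ)*cs^3*ξ₂*ξ₄ + (64:ℝ)*cs^3*ξ₂*ξ₃ + (32:ℝ)*cs^3*ξ₂^2 + (-16:ℝ)*cs^3*ξ₁*ξ₅ + (16:ℝ)*cs^3*ξ₁*ξ₄ + (56:ℝ)*cs^3*ξ₁*ξ₃ + (16:ℝ)*cs^3*ξ₁*ξ₂ + (-8:ℝ)*cs^3*ξ₁^2 + (16:ℝ)*cs^4*ξ₅^2 + (32:ℝ)*cs^4*ξ₄*ξ₅ + (-16:ℝ)*cs^4*ξ₃*ξ₅ + (-64:ℝ)*cs^4*ξ₃*ξ₄ + (-32:ℝ)*cs^4*ξ₃^2 + (32:ℝ)*cs^4*ξ₂*ξ₅ + (-64:ℝ)*cs^4*ξ₂*ξ₃ + (32:ℝ)*cs^4*ξ₁*ξ₅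 + (32:ℝ)*cs^4*ξ₁*ξ₄ + (-16:ℝ)*cs^4*ξ₁*ξ₃ + (32:ℝ)*cs^4*ξ₁*ξ₂ + (16:ℝ)*cs^4*ξ₁^2) * hd + ((-1/7:ℝ)*ξ₅^3 + (-4/7:ℝ)*ξ₄*ξ₅^2 + (4/7:ℝ)*ξ₄^2*ξ₅ + (8/7:ℝ)*ξ₄^3 + (4:ℝ)*ξ₃*ξ₄*ξ₅ + (4:ℝ)*ξ₃*ξ₄^2 + (3:ℝ)*ξ₃^2*ξ₅ + (2:ℝ)*ξ₃^2*ξ₄ + (-1:ℝ)*ξ₃^3 + (-4/7:ℝ)*ξ₂*ξ₅^2 + (8/7:ℝ)*ξ₂*ξ₄*ξ₅ + (24/7:ℝ)*ξ₂*ξ₄^2 + (4:ℝ)*ξ₂*ξ₃*ξ₅ + (8:ℝ)*ξ₂*ξ₃*ξ₄ + (2:ℝ)*ξ₂*ξ₃^2 + (4/7:ℝ)*ξ₂^2*ξ₅ + (24/7:ℝ)*ξ₂^2*ξ₄ + (4:ℝ)*ξ₂^2*ξ₃ + (8/7:ℝ)*ξ₂^3 + (-3/7:ℝ)*ξ₁*ξ₅^2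 + (-8/7:ℝ)*ξ₁*ξ₄*ξ₅ + (4/7:ℝ)*ξ₁*ξ₄^2 + (4:ℝ)*ξ₁*ξ₃*ξ₄ + (3:ℝ)*ξ₁*ξ₃^2 + (-8/7:ℝ)*ξ₁*ξ₂*ξ₅ + (8/7:ℝ)*ξ₁*ξ₂*ξ₄ + (4:ℝ)*ξ₁*ξ₂*ξ₃ + (4/7:ℝ)*ξ₁*ξ₂^2 + (-3/7:ℝ)*ξ₁^2*ξ₅ + (-4/7:ℝ)*ξ₁^2*ξ₄ + (-4/7:ℝ)*ξ₁^2*ξ₂ + (-1/7:ℝ)*ξ₁^3 + (4/7:ℝ)*cs*ξ₅^3 + (30/7:ℝ)*cs*ξ₄*ξ₅^2 + (68/7:ℝ)*cs*ξ₄^2*ξ₅ + (24/7:ℝ)*cs*ξ₄^3 + (4:ℝ)*cs*ξ₃*ξ₅^2 + (14:ℝ)*cs*ξ₃*ξ₄*ξ₅ + (2:ℝ)*cs*ξ₃^2*ξ₅ + (-10:ℝ)*cs*ξ₃^2*ξ₄ + (-4:ℝ)*cs*ξ₃^3 + (30/7:ℝ)*cs*ξ₂*ξ₅^2 + (136/7:ℝ)*cs*ξ₂*ξ₄*ξ₅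 + (72/7:ℝ)*cs*ξ₂*ξ₄^2 + (14:ℝ)*cs*ξ₂*ξ₃*ξ₅ + (-10:ℝ)*cs*ξ₂*ξ₃^2 + (68/7:ℝ)*cs*ξ₂^2*ξ₅ + (72/7:ℝ)*cs*ξ₂^2*ξ₄ + (24/7:ℝ)*cs*ξ₂^3 + (12/7:ℝ)*cs*ξ₁*ξ₅^2 + (60/7:ℝ)*cs*ξ₁*ξ₄*ξ₅ + (68/7:ℝ)*cs*ξ₁*ξ₄^2 + (8:ℝ)*cs*ξ₁*ξ₃*ξ₅ + (14:ℝ)*cs*ξ₁*ξ₃*ξ₄ + (2:ℝ)*cs*ξ₁*ξ₃^2 + (60/7:ℝ)*cs*ξ₁*ξ₂*ξ₅ + (136/7:ℝ)*cs*ξ₁*ξ₂*ξ₄ + (14:ℝ)*cs*ξ₁*ξ₂*ξ₃ + (68/7:ℝ)*cs*ξ₁*ξ₂^2 + (12/7:ℝ)*cs*ξ₁^2*ξ₅ + (30/7:ℝ)*cs*ξ₁^2*ξ₄ + (4:ℝ)*cs*ξ₁^2*ξ₃ + (30/7:ℝ)*cs*ξ₁^2*ξ₂ + (4/7:ℝ)*cs*ξ₁^3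 + (4/7:ℝ)*cs^2*ξ₅^3 + (16/7:ℝ)*cs^2*ξ₄*ξ₅^2 + (-16/7:ℝ)*cs^2*ξ₄^2*ξ₅ + (-32/7:ℝ)*cs^2*ξ₄^3 + (-16:ℝ)*cs^2*ξ₃*ξ₄*ξ₅ + (-16:ℝ)*cs^2*ξ₃*ξ₄^2 + (-12:ℝ)*cs^2*ξ₃^2*ξ₅ + (-8:ℝ)*cs^2*ξ₃^2*ξ₄ + (4:ℝ)*cs^2*ξ₃^3 + (16/7:ℝ)*cs^2*ξ₂*ξ₅^2 + (-32/7:ℝ)*cs^2*ξ₂*ξ₄*ξ₅ + (-96/7:ℝ)*cs^2*ξ₂*ξ₄^2 + (-16:ℝ)*cs^2*ξ₂*ξ₃*ξ₅ + (-32:ℝ)*cs^2*ξ₂*ξ₃*ξ₄ + (-8:ℝ)*cs^2*ξ₂*ξ₃^2 + (-16/7:ℝ)*cs^2*ξ₂^2*ξ₅ + (-96/7:ℝ)*cs^2*ξ₂^2*ξ₄ + (-16:ℝ)*cs^2*ξ₂^2*ξ₃ + (-32/7:ℝ)*cs^2*ξ₂^3 + (12/7:ℝ)*cs^2*ξ₁*ξ₅^2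 + (32/7:ℝ)*cs^2*ξ₁*ξ₄*ξ₅ + (-16/7:ℝ)*cs^2*ξ₁*ξ₄^2 + (-16:ℝ)*cs^2*ξ₁*ξ₃*ξ₄ + (-12:ℝ)*cs^2*ξ₁*ξ₃^2 + (32/7:ℝ)*cs^2*ξ₁*ξ₂*ξ₅ + (-32/7:ℝ)*cs^2*ξ₁*ξ₂*ξ₄ + (-16:ℝ)*cs^2*ξ₁*ξ₂*ξ₃ + (-16/7:ℝ)*cs^2*ξ₁*ξ₂^2 + (12/7:ℝ)*cs^2*ξ₁^2*ξ₅ + (16/7:ℝ)*cs^2*ξ₁^2*ξ₄ + (16/7:ℝ)*cs^2*ξ₁^2*ξ₂ + (4/7:ℝ)*cs^2*ξ₁^3 + (-16/7:ℝ)*cs^3*ξ₄*ξ₅^2 + (-32/7:ℝ)*cs^3*ξ₄^2*ξ₅ + (-24/7:ℝ)*cs^3*ξ₃*ξ₅^2 + (-32/7:ℝ)*cs^3*ξ₃*ξ₄*ξ₅ + (64/7:ℝ)*cs^3*ξ₃*ξ₄^2 + (24/7:ℝ)*cs^3*ξ₃^2*ξ₅ + (128/7:ℝ)*cs^3*ξ₃^2*ξ₄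 + (48/7:ℝ)*cs^3*ξ₃^3 + (-16/7:ℝ)*cs^3*ξ₂*ξ₅^2 + (-64/7:ℝ)*cs^3*ξ₂*ξ₄*ξ₅ + (-32/7:ℝ)*cs^3*ξ₂*ξ₃*ξ₅ + (128/7:ℝ)*cs^3*ξ₂*ξ₃*ξ₄ + (128/7:ℝ)*cs^3*ξ₂*ξ₃^2 + (-32/7:ℝ)*cs^3*ξ₂^2*ξ₅ + (64/7:ℝ)*cs^3*ξ₂^2*ξ₃ + (-32/7:ℝ)*cs^3*ξ₁*ξ₄*ξ₅ + (-32/7:ℝ)*cs^3*ξ₁*ξ₄^2 + (-48/7:ℝ)*cs^3*ξ₁*ξ₃*ξ₅ + (-32/7:ℝ)*cs^3*ξ₁*ξ₃*ξ₄ + (24/7:ℝ)*cs^3*ξ₁*ξ₃^2 + (-32/7:ℝ)*cs^3*ξ₁*ξ₂*ξ₅ + (-64/7:ℝ)*cs^3*ξ₁*ξ₂*ξ₄ + (-32/7:ℝ)*cs^3*ξ₁*ξ₂*ξ₃ + (-32/7:ℝ)*cs^3*ξ₁*ξ₂^2 + (-16/7:ℝ)*cs^3*ξ₁^2*ξ₄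 + (-24/7:ℝ)*cs^3*ξ₁^2*ξ₃ + (-16/7:ℝ)*cs^3*ξ₁^2*ξ₂) * hc

private lemma key_det (A : Matrix (Fin 6) (Fin 6) ℂ) (hA : IsReciprocal A)
    (ξ₁ ξ₂ ξ₃ ξ₄ ξ₅ : ℝ)
    (h1 : ξ₁ = (‖A 0 1‖ - ‖A 1 0‖) ^ 2 / 4)
    (h2 : ξ₂ = (‖A 1 2‖ - ‖A 2 1‖) ^ 2 / 4)
    (h3 : ξ₃ = (‖A 2 3‖ - ‖A 3 2‖) ^ 2 / 4)
    (h4 : ξ₄ = (‖A 3 4‖ - ‖A 4 3‖) ^ 2 / 4)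
    (h5 : ξ₅ = (‖A 4 5‖ - ‖A 5 4‖) ^ 2 / 4)
    (θ lam : ℝ) :
    (RePart θ A - (lam : ℂ) • 1).det =
      ((lam^6 - ((Real.cos θ^2 + ξ₁)+(Real.cos θ^2 + ξ₂)+(Real.cos θ^2 + ξ₃)+(Real.cos θ^2 + ξ₄)+(Real.cos θ^2 + ξ₅))*lam^4 + ((Real.cos θ^2 + ξ₁)*(Real.cos θ^2 + ξ₃)+(Real.cos θ^2 + ξ₁)*(Real.cos θ^2 + ξ₄)+(Real.cos θ^2 + ξ₁)*(Real.cos θ^2 + ξ₅)+(Real.cos θ^2 + ξ₂)*(Real.cos θ^2 + ξ₄)+(Real.cos θ^2 + ξ₂)*(Real.cos θ^2 + ξ₅)+(Real.cos θ^2 + ξ₃)*(Real.cos θ^2 + ξ₅))*lam^2 - (Real.cos θ^2 + ξ₁)*(Real.cos θ^2 + ξ₃)*(Real.cos θ^2 + ξ₅) : ℝ) : ℂ) := by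
  obtain ⟨hz, hp⟩ := hA
  have z00 : A 0 0 = 0 := hz 0 0 (by decide)
  have z02 : A 0 2 = 0 := hz 0 2 (by decide)
  have z03 : A 0 3 = 0 := hz 0 3 (by decide)
  have z04 : A 0 4 = 0 := hz 0 4 (by decide)
  have z05 : A 0 5 = 0 := hz 0 5 (by decide)
  have z11 : A 1 1 = 0 := hz 1 1 (by decide)
  have z13 : A 1 3 = 0 := hz 1 3 (by decide)
  have z14 : A 1 4 = 0 := hz 1 4 (by decide)
  have z15 : A 1 5 = 0 := hz 1 5 (by decide)
  have z20 : A 2 0 = 0 := hz 2 0 (by decide)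
  have z22 : A 2 2 = 0 := hz 2 2 (by decide)
  have z24 : A 2 4 = 0 := hz 2 4 (by decide)
  have z25 : A 2 5 = 0 := hz 2 5 (by decide)
  have z30 : A 3 0 = 0 := hz 3 0 (by decide)
  have z31 : A 3 1 = 0 := hz 3 1 (by decide)
  have z33 : A 3 3 = 0 := hz 3 3 (by decide)
  have z35 : A 3 5 = 0 := hz 3 5 (by decide)
  have z40 : A 4 0 = 0 := hz 4 0 (by decide)
  have z41 : A 4 1 = 0 := hz 4 1 (by decide)
  have z42 : A 4 2 = 0 := hz 4 2 (by decide)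
  have z44 : A 4 4 = 0 := hz 4 4 (by decide)
  have z50 : A 5 0 = 0 := hz 5 0 (by decide)
  have z51 : A 5 1 = 0 := hz 5 1 (by decide)
  have z52 : A 5 2 = 0 := hz 5 2 (by decide)
  have z53 : A 5 3 = 0 := hz 5 3 (by decide)
  have z55 : A 5 5 = 0 := hz 5 5 (by decide)
  have hM : RePart θ A - (lam : ℂ) • 1 =
      !![-(lam:ℂ), (2:ℂ)⁻¹ * (Complex.exp (↑θ * Complex.I) * A 0 1 + (starRingEnd ℂ) (Complex.exp (↑θ * Complex.I) * A 1 0)), 0, 0, 0, 0;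
        (2:ℂ)⁻¹ * (Complex.exp (↑θ * Complex.I) * A 1 0 + (starRingEnd ℂ) (Complex.exp (↑θ * Complex.I) * A 0 1)), -(lam:ℂ), (2:ℂ)⁻¹ * (Complex.exp (↑θ * Complex.I) * A 1 2 + (starRingEnd ℂ) (Complex.exp (↑θ * Complex.I) * A 2 1)), 0, 0, 0;
        0, (2:ℂ)⁻¹ * (Complex.exp (↑θ * Complex.I) * A 2 1 + (starRingEnd ℂ) (Complex.exp (↑θ * Complex.I) * A 1 2)), -(lam:ℂ), (2:ℂ)⁻¹ * (Complex.exp (↑θ * Complex.I) * A 2 3 + (starRingEnd ℂ) (Complex.exp (↑θ * Complex.I) * A 3 2)), 0, 0;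
        0, 0, (2:ℂ)⁻¹ * (Complex.exp (↑θ * Complex.I) * A 3 2 + (starRingEnd ℂ) (Complex.exp (↑θ * Complex.I) * A 2 3)), -(lam:ℂ), (2:ℂ)⁻¹ * (Complex.exp (↑θ * Complex.I) * A 3 4 + (starRingEnd ℂ) (Complex.exp (↑θ * Complex.I) * A 4 3)), 0;
        0, 0, 0, (2:ℂ)⁻¹ * (Complex.exp (↑θ * Complex.I) * A 4 3 + (starRingEnd ℂ) (Complex.exp (↑θ * Complex.I) * A 3 4)), -(lam:ℂ), (2:ℂ)⁻¹ * (Complex.exp (↑θ * Complex.I) * A 4 5 + (starRingEnd ℂ) (Complex.exp (↑θ * Complex.I) * A 5 4));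
        0, 0, 0, 0, (2:ℂ)⁻¹ * (Complex.exp (↑θ * Complex.I) * A 5 4 + (starRingEnd ℂ) (Complex.exp (↑θ * Complex.I) * A 4 5)), -(lam:ℂ)] := by
    have h00 : (RePart θ A - (lam : ℂ) • 1) 0 0 = -(lam:ℂ) := by simp [RePart, z00]
    have h01 : (RePart θ A - (lam : ℂ) • 1) 0 1 = (2:ℂ)⁻¹ * (Complex.exp (↑θ * Complex.I) * A 0 1 + (starRingEnd ℂ) (Complex.exp (↑θ * Complex.I) * A 1 0)) := by simp [RePart, Matrix.one_apply]; ring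
    have h02 : (RePart θ A - (lam : ℂ) • 1) 0 2 = 0 := by simp [RePart, Matrix.one_apply, z02, z20]
    have h03 : (RePart θ A - (lam : ℂ) • 1) 0 3 = 0 := by simp [RePart, Matrix.one_apply, z03, z30]
    have h04 : (RePart θ A - (lam : ℂ) • 1) 0 4 = 0 := by simp [RePart, Matrix.one_apply, z04, z40]
    have h05 : (RePart θ A - (lam : ℂ) • 1) 0 5 = 0 := by simp [RePart, Matrix.one_apply, z05, z50]
    have h10 : (RePart θ A - (lam : ℂ) • 1) 1 0 = (2:ℂ)⁻¹ * (Complex.exp (↑θ * Complex.I) * A 1 0 + (starRingEnd ℂ) (Complex.exp (↑θ * Complex.I) * A 0 1)) := by simp [RePart, Matrix.one_apply]; ring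
    have h11 : (RePart θ A - (lam : ℂ) • 1) 1 1 = -(lam:ℂ) := by simp [RePart, z11]
    have h12 : (RePart θ A - (lam : ℂ) • 1) 1 2 = (2:ℂ)⁻¹ * (Complex.exp (↑θ * Complex.I) * A 1 2 + (starRingEnd ℂ) (Complex.exp (↑θ * Complex.I) * A 2 1)) := by simp [RePart, Matrix.one_apply]; ring
    have h13 : (RePart θ A - (lam : ℂ) • 1) 1 3 = 0 := by simp [RePart, Matrix.one_apply, z13, z31]
    have h14 : (RePart θ A - (lam : ℂ) • 1) 1 4 = 0 := by simp [RePart, Matrix.one_apply, z14, z41]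
    have h15 : (RePart θ A - (lam : ℂ) • 1) 1 5 = 0 := by simp [RePart, Matrix.one_apply, z15, z51]
    have h20 : (RePart θ A - (lam : ℂ) • 1) 2 0 = 0 := by simp [RePart, Matrix.one_apply, z20, z02]
    have h21 : (RePart θ A - (lam : ℂ) • 1) 2 1 = (2:ℂ)⁻¹ * (Complex.exp (↑θ * Complex.I) * A 2 1 + (starRingEnd ℂ) (Complex.exp (↑θ * Complex.I) * A 1 2)) := by simp [RePart, Matrix.one_apply]; ring
    have h22 : (RePart θ A - (lam : ℂ) • 1) 2 2 = -(lam:ℂ) := by simp [RePart, z22]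
    have h23 : (RePart θ A - (lam : ℂ) • 1) 2 3 = (2:ℂ)⁻¹ * (Complex.exp (↑θ * Complex.I) * A 2 3 + (starRingEnd ℂ) (Complex.exp (↑θ * Complex.I) * A 3 2)) := by simp [RePart, Matrix.one_apply]; ring
    have h24 : (RePart θ A - (lam : ℂ) • 1) 2 4 = 0 := by simp [RePart, Matrix.one_apply, z24, z42]
    have h25 : (RePart θ A - (lam : ℂ) • 1) 2 5 = 0 := by simp [RePart, Matrix.one_apply, z25, z52]
    have h30 : (RePart θ A - (lam : ℂ) • 1) 3 0 = 0 := by simp [RePart, Matrix.one_apply, z30, z03]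
    have h31 : (RePart θ A - (lam : ℂ) • 1) 3 1 = 0 := by simp [RePart, Matrix.one_apply, z31, z13]
    have h32 : (RePart θ A - (lam : ℂ) • 1) 3 2 = (2:ℂ)⁻¹ * (Complex.exp (↑θ * Complex.I) * A 3 2 + (starRingEnd ℂ) (Complex.exp (↑θ * Complex.I) * A 2 3)) := by simp [RePart, Matrix.one_apply]; ring
    have h33 : (RePart θ A - (lam : ℂ) • 1) 3 3 = -(lam:ℂ) := by simp [RePart, z33]
    have h34 : (RePart θ A - (lam : ℂ) • 1) 3 4 = (2:ℂ)⁻¹ * (Complex.exp (↑θ * Complex.I) * A 3 4 + (starRingEnd ℂ) (Complex.exp (↑θ * Complex.I) * A 4 3)) := by simp [RePart, Matrix.one_apply]; ring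
    have h35 : (RePart θ A - (lam : ℂ) • 1) 3 5 = 0 := by simp [RePart, Matrix.one_apply, z35, z53]
    have h40 : (RePart θ A - (lam : ℂ) • 1) 4 0 = 0 := by simp [RePart, Matrix.one_apply, z40, z04]
    have h41 : (RePart θ A - (lam : ℂ) • 1) 4 1 = 0 := by simp [RePart, Matrix.one_apply, z41, z14]
    have h42 : (RePart θ A - (lam : ℂ) • 1) 4 2 = 0 := by simp [RePart, Matrix.one_apply, z42, z24]
    have h43 : (RePart θ A - (lam : ℂ) • 1) 4 3 = (2:ℂ)⁻¹ * (Complex.exp (↑θ * Complex.I) * A 4 3 + (starRingEnd ℂ) (Complex.exp (↑θ * Complex.I) * A 3 4)) := by simp [RePart, Matrix.one_apply]; ring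
    have h44 : (RePart θ A - (lam : ℂ) • 1) 4 4 = -(lam:ℂ) := by simp [RePart, z44]
    have h45 : (RePart θ A - (lam : ℂ) • 1) 4 5 = (2:ℂ)⁻¹ * (Complex.exp (↑θ * Complex.I) * A 4 5 + (starRingEnd ℂ) (Complex.exp (↑θ * Complex.I) * A 5 4)) := by simp [RePart, Matrix.one_apply]; ring
    have h50 : (RePart θ A - (lam : ℂ) • 1) 5 0 = 0 := by simp [RePart, Matrix.one_apply, z50, z05]
    have h51 : (RePart θ A - (lam : ℂ) • 1) 5 1 = 0 := by simp [RePart, Matrix.one_apply, z51, z15]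
    have h52 : (RePart θ A - (lam : ℂ) • 1) 5 2 = 0 := by simp [RePart, Matrix.one_apply, z52, z25]
    have h53 : (RePart θ A - (lam : ℂ) • 1) 5 3 = 0 := by simp [RePart, Matrix.one_apply, z53, z35]
    have h54 : (RePart θ A - (lam : ℂ) • 1) 5 4 = (2:ℂ)⁻¹ * (Complex.exp (↑θ * Complex.I) * A 5 4 + (starRingEnd ℂ) (Complex.exp (↑θ * Complex.I) * A 4 5)) := by simp [RePart, Matrix.one_apply]; ring
    have h55 : (RePart θ A - (lam : ℂ) • 1) 5 5 = -(lam:ℂ) := by simp [RePart, z55]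
    ext i j
    fin_cases i <;> fin_cases j
    · exact h00
    · exact h01
    · exact h02
    · exact h03
    · exact h04
    · exact h05
    · exact h10
    · exact h11
    · exact h12
    · exact h13
    · exact h14
    · exact h15
    · exact h20
    · exact h21
    · exact h22
    · exact h23
    · exact h24
    · exact h25
    · exact h30
    · exact h31
    · exact h32
    · exact h33
    · exact h34
    · exact h35
    · exact h40
    · exact h41
    · exact h42
    · exact h43
    · exact h44
    · exact h45
    · exact h50
    · exact h51
    · exact h52
    · exact h53
    · exact h54
    · exact h55
  rw [hM, det_tridiag6]
  rw [entry_prod θ ξ₁ (A 0 1) (A 1 0) (hp 0 1 (by decide)) h1,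
      entry_prod θ ξ₂ (A 1 2) (A 2 1) (hp 1 2 (by decide)) h2,
      entry_prod θ ξ₃ (A 2 3) (A 3 2) (hp 2 3 (by decide)) h3,
      entry_prod θ ξ₄ (A 3 4) (A 4 3) (hp 3 4 (by decide)) h4,
      entry_prod θ ξ₅ (A 4 5) (A 5 4) (hp 4 5 (by decide)) h5]
  push_cast
  ring

/-- Criterion for the Kippenhahn curve of a 6-by-6 reciprocal matrix to consist of
three concentric ellipses centered at the origin. -/
theorem three_concentric_ellipses_six (A : Matrix (Fin 6) (Fin 6) ℂ) (hA : IsReciprocal A)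
    (ξ₁ ξ₂ ξ₃ ξ₄ ξ₅ : ℝ)
    (h1 : ξ₁ = (‖A 0 1‖ - ‖A 1 0‖) ^ 2 / 4)
    (h2 : ξ₂ = (‖A 1 2‖ - ‖A 2 1‖) ^ 2 / 4)
    (h3 : ξ₃ = (‖A 2 3‖ - ‖A 3 2‖) ^ 2 / 4)
    (h4 : ξ₄ = (‖A 3 4‖ - ‖A 4 3‖) ^ 2 / 4)
    (h5 : ξ₅ = (‖A 4 5‖ - ‖A 5 4‖) ^ 2 / 4) :
    (∃ X₁ X₂ X₃ c₁ c₂ c₃ : ℝ, ∀ θ lam : ℝ,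
      (RePart θ A - (lam : ℂ) • 1).det =
        (((lam ^ 2 - (X₁ ^ 2 * Real.cos θ ^ 2 + c₁ ^ 2)) *
          (lam ^ 2 - (X₂ ^ 2 * Real.cos θ ^ 2 + c₂ ^ 2)) *
          (lam ^ 2 - (X₃ ^ 2 * Real.cos θ ^ 2 + c₃ ^ 2)) : ℝ) : ℂ)) ↔
      (2 * ξ₁ ^ 2 + 4 * ξ₂ * ξ₁ - 2 * ξ₃ * ξ₁ - 3 * ξ₄ * ξ₁ - 3 * ξ₅ * ξ₁ + ξ₂ ^ 2 + ξ₄ ^ 2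
          + 2 * ξ₅ ^ 2 + 2 * ξ₂ * ξ₃ - 5 * ξ₂ * ξ₄ + 2 * ξ₃ * ξ₄ - 3 * ξ₂ * ξ₅
          - 2 * ξ₃ * ξ₅ + 4 * ξ₄ * ξ₅ = 0 ∧
       2 * ξ₁ ^ 2 + ξ₂ * ξ₁ - 3 * ξ₃ * ξ₁ + ξ₄ * ξ₁ - 3 * ξ₅ * ξ₁ - ξ₂ ^ 2 + ξ₃ ^ 2 - ξ₄ ^ 2
          + 2 * ξ₅ ^ 2 + 2 * ξ₂ * ξ₃ - 2 * ξ₂ * ξ₄ + 2 * ξ₃ * ξ₄ + ξ₂ * ξ₅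
          - 3 * ξ₃ * ξ₅ + ξ₄ * ξ₅ = 0 ∧
       ξ₁ ^ 3 + 2 * ξ₂ * ξ₁ ^ 2 + 4 * ξ₃ * ξ₁ ^ 2 + 2 * ξ₄ * ξ₁ ^ 2 + 3 * ξ₅ * ξ₁ ^ 2
          - ξ₂ ^ 2 * ξ₁ + 3 * ξ₃ ^ 2 * ξ₁ - ξ₄ ^ 2 * ξ₁ + 3 * ξ₅ ^ 2 * ξ₁
          + 3 * ξ₂ * ξ₃ * ξ₁ - 2 * ξ₂ * ξ₄ * ξ₁ + 3 * ξ₃ * ξ₄ * ξ₁ + 4 * ξ₂ * ξ₅ * ξ₁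
          - 41 * ξ₃ * ξ₅ * ξ₁ + 4 * ξ₄ * ξ₅ * ξ₁ - ξ₂ ^ 3 - ξ₃ ^ 3 - ξ₄ ^ 3 + ξ₅ ^ 3
          + 2 * ξ₂ * ξ₃ ^ 2 - 3 * ξ₂ * ξ₄ ^ 2 + ξ₃ * ξ₄ ^ 2 + 2 * ξ₂ * ξ₅ ^ 2
          + 4 * ξ₃ * ξ₅ ^ 2 + 2 * ξ₄ * ξ₅ ^ 2 + ξ₂ ^ 2 * ξ₃ - 3 * ξ₂ ^ 2 * ξ₄
          + 2 * ξ₃ ^ 2 * ξ₄ + 2 * ξ₂ * ξ₃ * ξ₄ - ξ₂ ^ 2 * ξ₅ + 3 * ξ₃ ^ 2 * ξ₅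
          - ξ₄ ^ 2 * ξ₅ + 3 * ξ₂ * ξ₃ * ξ₅ - 2 * ξ₂ * ξ₄ * ξ₅ + 3 * ξ₃ * ξ₄ * ξ₅ = 0) := by
  obtain ⟨cs, hc⟩ : ∃ x : ℝ, 8*x^3 - 4*x^2 - 4*x + 1 = 0 := ⟨_, croot⟩
  have key := key_det A hA ξ₁ ξ₂ ξ₃ ξ₄ ξ₅ h1 h2 h3 h4 h5
  have hg1 : 0 ≤ ξ₁ := by rw [h1]; positivity
  have hg2 : 0 ≤ ξ₂ := by rw [h2]; positivity
  have hg3 : 0 ≤ ξ₃ := by rw [h3]; positivity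
  have hg4 : 0 ≤ ξ₄ := by rw [h4]; positivity
  have hg5 : 0 ≤ ξ₅ := by rw [h5]; positivity
  have ht0 : Real.cos (0:ℝ)^2 = 1 := by norm_num
  have ht1 : Real.cos (Real.pi/2)^2 = 0 := by norm_num [Real.cos_pi_div_two]
  have ht2 : Real.cos (Real.pi/4)^2 = 1/2 := by
    rw [Real.cos_pi_div_four, div_pow, Real.sq_sqrt] <;> norm_num
  have ht3 : Real.cos (Real.pi/3)^2 = 1/4 := by rw [Real.cos_pi_div_three]; norm_num
  constructor
  · rintro ⟨W₁, W₂, W₃, v₁, v₂, v₃, H⟩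
    have hG00 := Complex.ofReal_inj.mp ((key 0 0).symm.trans (H 0 0))
    have hG01 := Complex.ofReal_inj.mp ((key 0 1).symm.trans (H 0 1))
    have hG02 := Complex.ofReal_inj.mp ((key 0 2).symm.trans (H 0 2))
    have hG03 := Complex.ofReal_inj.mp ((key 0 3).symm.trans (H 0 3))
    rw [ht0] at hG00 hG01 hG02 hG03
    have hG10 := Complex.ofReal_inj.mp ((key (Real.pi/2) 0).symm.trans (H (Real.pi/2) 0))
    have hG11 := Complex.ofReal_inj.mp ((key (Real.pi/2) 1).symm.trans (H (Real.pi/2) 1))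
    have hG12 := Complex.ofReal_inj.mp ((key (Real.pi/2) 2).symm.trans (H (Real.pi/2) 2))
    have hG13 := Complex.ofReal_inj.mp ((key (Real.pi/2) 3).symm.trans (H (Real.pi/2) 3))
    rw [ht1] at hG10 hG11 hG12 hG13
    have hG20 := Complex.ofReal_inj.mp ((key (Real.pi/4) 0).symm.trans (H (Real.pi/4) 0))
    have hG21 := Complex.ofReal_inj.mp ((key (Real.pi/4) 1).symm.trans (H (Real.pi/4) 1))
    have hG22 := Complex.ofReal_inj.mp ((key (Real.pi/4) 2).symm.trans (H (Real.pi/4) 2))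
    have hG23 := Complex.ofReal_inj.mp ((key (Real.pi/4) 3).symm.trans (H (Real.pi/4) 3))
    rw [ht2] at hG20 hG21 hG22 hG23
    have hG30 := Complex.ofReal_inj.mp ((key (Real.pi/3) 0).symm.trans (H (Real.pi/3) 0))
    have hG31 := Complex.ofReal_inj.mp ((key (Real.pi/3) 1).symm.trans (H (Real.pi/3) 1))
    have hG32 := Complex.ofReal_inj.mp ((key (Real.pi/3) 2).symm.trans (H (Real.pi/3) 2))
    have hG33 := Complex.ofReal_inj.mp ((key (Real.pi/3) 3).symm.trans (H (Real.pi/3) 3))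
    rw [ht3] at hG30 hG31 hG32 hG33
    have E1 : (W₁^2) + (W₂^2) + (W₃^2) = 5 := by
      linear_combination (7/54:ℝ) * hG00 + (-13/72:ℝ) * hG01 + (1/18:ℝ) * hG02 + (-1/216:ℝ) * hG03 + (-49/18:ℝ) * hG10 + (91/24:ℝ) * hG11 + (-7/6:ℝ) * hG12 + (7/72:ℝ) * hG13 + (-14/9:ℝ) * hG20 + (13/6:ℝ) * hG21 + (-2/3:ℝ) * hG22 + (1/18:ℝ) * hG23 + (112/27:ℝ) * hG30 + (-52/9:ℝ) * hG31 + (16/9:ℝ) * hG32 + (-4/27:ℝ) * hG33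
    have E2 : (v₁^2) + (v₂^2) + (v₃^2) = ξ₁+ξ₂+ξ₃+ξ₄+ξ₅ := by
      linear_combination (7/18:ℝ) * hG10 + (-13/24:ℝ) * hG11 + (1/6:ℝ) * hG12 + (-1/72:ℝ) * hG13
    have E3 : (W₁^2)*(W₂^2) + (W₁^2)*(W₃^2) + (W₂^2)*(W₃^2) = 6 := by
      linear_combination (-49/18:ℝ) * hG00 + (3/1:ℝ) * hG01 + (-3/10:ℝ) * hG02 + (1/45:ℝ) * hG03 + (343/18:ℝ) * hG10 + (-21/1:ℝ) * hG11 + (21/10:ℝ) * hG12 + (-7/45:ℝ) * hG13 + (245/9:ℝ) * hG20 + (-30/1:ℝ) * hG21 + (3/1:ℝ) * hG22 + (-2/9:ℝ) * hG23 + (-392/9:ℝ) * hG30 + (48/1:ℝ) * hG31 + (-24/5:ℝ) * hG32 + (16/45:ℝ) * hG33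
    have E4 : (W₁^2)*((v₂^2)+(v₃^2)) + (W₂^2)*((v₁^2)+(v₃^2)) + (W₃^2)*((v₁^2)+(v₂^2)) = 3*ξ₁+2*ξ₂+2*ξ₃+2*ξ₄+3*ξ₅ := by
      linear_combination (49/108:ℝ) * hG00 + (-1/2:ℝ) * hG01 + (1/20:ℝ) * hG02 + (-1/270:ℝ) * hG03 + (-343/36:ℝ) * hG10 + (21/2:ℝ) * hG11 + (-21/20:ℝ) * hG12 + (7/90:ℝ) * hG13 + (-49/9:ℝ) * hG20 + (6/1:ℝ) * hG21 + (-3/5:ℝ) * hG22 + (2/45:ℝ) * hG23 + (392/27:ℝ) * hG30 + (-16/1:ℝ) * hG31 + (8/5:ℝ) * hG32 + (-16/135:ℝ) * hG33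
    have E5 : (v₁^2)*(v₂^2) + (v₁^2)*(v₃^2) + (v₂^2)*(v₃^2) = ξ₁*ξ₃+ξ₁*ξ₄+ξ₁*ξ₅+ξ₂*ξ₄+ξ₂*ξ₅+ξ₃*ξ₅ := by
      linear_combination (49/36:ℝ) * hG10 + (-3/2:ℝ) * hG11 + (3/20:ℝ) * hG12 + (-1/90:ℝ) * hG13
    have E6 : (W₁^2)*((W₂^2)*(W₃^2)) = 1 := by
      linear_combination (8/3:ℝ) * hG00 + (-8/1:ℝ) * hG10 + (-16/1:ℝ) * hG20 + (64/3:ℝ) * hG30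
    have E7 : (W₁^2)*(W₂^2)*(v₃^2) + (W₁^2)*(W₃^2)*(v₂^2) + (W₂^2)*(W₃^2)*(v₁^2) = ξ₁+ξ₃+ξ₅ := by
      linear_combination (-2/1:ℝ) * hG00 + (14/1:ℝ) * hG10 + (20/1:ℝ) * hG20 + (-32/1:ℝ) * hG30
    have E8 : (W₁^2)*(v₂^2)*(v₃^2) + (W₂^2)*(v₁^2)*(v₃^2) + (W₃^2)*(v₁^2)*(v₂^2) = ξ₁*ξ₃+ξ₁*ξ₅+ξ₃*ξ₅ := by
      linear_combination (1/3:ℝ) * hG00 + (-7/1:ℝ) * hG10 + (-4/1:ℝ) * hG20 + (32/3:ℝ) * hG30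
    have E9 : (v₁^2)*((v₂^2)*(v₃^2)) = ξ₁*ξ₃*ξ₅ := by
      linear_combination (1/1:ℝ) * hG10
    have hroot1 : ((W₁^2) - (4*cs^2))*((W₁^2) - (4*(4*cs^3-3*cs)^2))*((W₁^2) - (4*(16*cs^5-20*cs^3+5*cs)^2)) = 0 := by
      linear_combination ((W₁^2)^2) * E1 + (-1:ℝ)*(W₁^2) * E3 + E6 + ((1:ℝ) + (-6:ℝ)*(W₁^2) + (5:ℝ)*(W₁^2)^2 + (4:ℝ)*cs + (-24:ℝ)*cs*(W₁^2) + (20:ℝ)*cs*(W₁^2)^2 + (20:ℝ)*cs^2 + (-120:ℝ)*cs^2*(W₁^2) + (-40:ℝ)*cs^2*(W₁^2)^2 + (88:ℝ)*cs^3 + (-528:ℝ)*cs^3*(W₁^2) + (-120:ℝ)*cs^3*(W₁^2)^2 + (400:ℝ)*cs^4 + (1744:ℝ)*cs^4*(W₁^2) + (96:ℝ)*cs^4*(W₁^2)^2 + (1792:ℝ)*cs^5 + (5824:ℝ)*cs^5*(W₁^2) + (224:ℝ)*cs^5*(W₁^2)^2 + (-6336:ℝ)*cs^6 + (-7488:ℝ)*cs^6*(W₁^2)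 + (-64:ℝ)*cs^6*(W₁^2)^2 + (-21376:ℝ)*cs^7 + (-20608:ℝ)*cs^7*(W₁^2) + (-128:ℝ)*cs^7*(W₁^2)^2 + (28416:ℝ)*cs^8 + (14080:ℝ)*cs^8*(W₁^2) + (78848:ℝ)*cs^9 + (33792:ℝ)*cs^9*(W₁^2) + (-55296:ℝ)*cs^10 + (-12288:ℝ)*cs^10*(W₁^2) + (-133120:ℝ)*cs^11 + (-26624:ℝ)*cs^11*(W₁^2) + (49152:ℝ)*cs^12 + (4096:ℝ)*cs^12*(W₁^2) + (106496:ℝ)*cs^13 + (8192:ℝ)*cs^13*(W₁^2) + (-16384:ℝ)*cs^14 + (-32768:ℝ)*cs^15) * hc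
    rcases mul_eq_zero.mp hroot1 with h12 | hx1r
    · rcases mul_eq_zero.mp h12 with hx1r | hx1r
      · have hx1 := sub_eq_zero.mp hx1r
        have hquad : ((W₂^2) - (4*(4*cs^3-3*cs)^2))*((W₂^2) - (4*(16*cs^5-20*cs^3+5*cs)^2)) = 0 := by
          linear_combination ((W₂^2) + (W₁^2)) * E1 + ((-1:ℝ)) * E3 + ((5:ℝ) + (-1:ℝ)*(W₂^2) + (-1:ℝ)*(W₁^2) + (-4:ℝ)*cs^2) * hx1 + ((-6:ℝ) + (5:ℝ)*(W₂^2) + (-24:ℝ)*cs + (20:ℝ)*cs*(W₂^2) + (-100:ℝ)*cs^2 + (-40:ℝ)*cs^2*(W₂^2) + (-448:ℝ)*cs^3 + (-120:ℝ)*cs^3*(W₂^2) + (1584:ℝ)*cs^4 + (96:ℝ)*cs^4*(W₂^2) + (5344:ℝ)*cs^5 + (224:ℝ)*cs^5*(W₂^2) + (-7104:ℝ)*cs^6 + (-64:ℝ)*cs^6*(W₂^2) + (-19712:ℝ)*cs^7 + (-128:ℝ)*cs^7*(W₂^2) + (13824:ℝ)*cs^8 + (33280:ℝ)*cs^9 +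 (-12288:ℝ)*cs^10 + (-26624:ℝ)*cs^11 + (4096:ℝ)*cs^12 + (8192:ℝ)*cs^13) * hc
        rcases mul_eq_zero.mp hquad with hx2r | hx2r
        · have hx2 := sub_eq_zero.mp hx2r
          have hx3 : (W₃^2) = (4*(16*cs^5-20*cs^3+5*cs)^2) := by
            linear_combination E1 - hx1 - hx2 + ((5:ℝ) + (20:ℝ)*cs + (-40:ℝ)*cs^2 + (-120:ℝ)*cs^3 + (96:ℝ)*cs^4 + (224:ℝ)*cs^5 + (-64:ℝ)*cs^6 + (-128:ℝ)*cs^7) * hc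
          exact forward_core cs ξ₁ ξ₂ ξ₃ ξ₄ ξ₅ (v₁^2) (v₂^2) (v₃^2) hc
            (by linear_combination E2) (by linear_combination E4 - ((v₂^2)+(v₃^2))*hx1 - ((v₁^2)+(v₃^2))*hx2 - ((v₁^2)+(v₂^2))*hx3 + (0:ℝ) * hc)
            (by linear_combination E5) (by linear_combination E7 + ((-1:ℝ)*(v₃^2)*(W₂^2) + (-1:ℝ)*(v₂^2)*(W₃^2))*hx1 + ((-1:ℝ)*(v₁^2)*(W₃^2) + (-4:ℝ)*cs^2*(v₃^2))*hx2 + ((-4:ℝ)*cs^2*(v₂^2) + (-36:ℝ)*cs^2*(v₁^2) + (96:ℝ)*cs^4*(v₁^2) + (-64:ℝ)*cs^6*(v₁^2))*hx3 + (0:ℝ) * hc)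
            (by linear_combination E8 - (v₂^2)*(v₃^2)*hx1 - (v₁^2)*(v₃^2)*hx2 - (v₁^2)*(v₂^2)*hx3 + (0:ℝ) * hc) (by linear_combination E9)
        · have hx2 := sub_eq_zero.mp hx2r
          have hx3 : (W₃^2) = (4*(4*cs^3-3*cs)^2) := by
            linear_combination E1 - hx1 - hx2 + ((5:ℝ) + (20:ℝ)*cs + (-40:ℝ)*cs^2 + (-120:ℝ)*cs^3 + (96:ℝ)*cs^4 + (224:ℝ)*cs^5 + (-64:ℝ)*cs^6 + (-128:ℝ)*cs^7) * hc
          exact forward_core cs ξ₁ ξ₂ ξ₃ ξ₄ ξ₅ (v₁^2) (v₃^2) (v₂^2) hc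
            (by linear_combination E2) (by linear_combination E4 - ((v₂^2)+(v₃^2))*hx1 - ((v₁^2)+(v₃^2))*hx2 - ((v₁^2)+(v₂^2))*hx3 + (0:ℝ) * hc)
            (by linear_combination E5) (by linear_combination E7 + ((-1:ℝ)*(v₃^2)*(W₂^2) + (-1:ℝ)*(v₂^2)*(W₃^2))*hx1 + ((-1:ℝ)*(v₁^2)*(W₃^2) + (-4:ℝ)*cs^2*(v₃^2))*hx2 + ((-4:ℝ)*cs^2*(v₂^2) + (-100:ℝ)*cs^2*(v₁^2) + (800:ℝ)*cs^4*(v₁^2) + (-2240:ℝ)*cs^6*(v₁^2) + (2560:ℝ)*cs^8*(v₁^2) + (-1024:ℝ)*cs^10*(v₁^2))*hx3 + (0:ℝ) * hc)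
            (by linear_combination E8 - (v₂^2)*(v₃^2)*hx1 - (v₁^2)*(v₃^2)*hx2 - (v₁^2)*(v₂^2)*hx3 + (0:ℝ) * hc) (by linear_combination E9)
      · have hx1 := sub_eq_zero.mp hx1r
        have hquad : ((W₂^2) - (4*cs^2))*((W₂^2) - (4*(16*cs^5-20*cs^3+5*cs)^2)) = 0 := by
          linear_combination ((W₂^2) + (W₁^2)) * E1 + ((-1:ℝ)) * E3 + ((5:ℝ) + (-1:ℝ)*(W₂^2) + (-1:ℝ)*(W₁^2) + (-36:ℝ)*cs^2 + (96:ℝ)*cs^4 + (-64:ℝ)*cs^6) * hx1 + ((-6:ℝ) + (5:ℝ)*(W₂^2) + (-24:ℝ)*cs + (20:ℝ)*cs*(W₂^2) + (60:ℝ)*cs^2 + (-40:ℝ)*cs^2*(W₂^2) + (192:ℝ)*cs^3 + (-120:ℝ)*cs^3*(W₂^2) + (-176:ℝ)*cs^4 + (96:ℝ)*cs^4*(W₂^2) + (-416:ℝ)*cs^5 + (224:ℝ)*cs^5*(W₂^2) + (128:ℝ)*cs^6 + (-64:ℝ)*cs^6*(W₂^2) + (256:ℝ)*cs^7 + (-128:ℝ)*cs^7*(W₂^2))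 * hc
        rcases mul_eq_zero.mp hquad with hx2r | hx2r
        · have hx2 := sub_eq_zero.mp hx2r
          have hx3 : (W₃^2) = (4*(16*cs^5-20*cs^3+5*cs)^2) := by
            linear_combination E1 - hx1 - hx2 + ((5:ℝ) + (20:ℝ)*cs + (-40:ℝ)*cs^2 + (-120:ℝ)*cs^3 + (96:ℝ)*cs^4 + (224:ℝ)*cs^5 + (-64:ℝ)*cs^6 + (-128:ℝ)*cs^7) * hc
          exact forward_core cs ξ₁ ξ₂ ξ₃ ξ₄ ξ₅ (v₂^2) (v₁^2) (v₃^2) hc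
            (by linear_combination E2) (by linear_combination E4 - ((v₂^2)+(v₃^2))*hx1 - ((v₁^2)+(v₃^2))*hx2 - ((v₁^2)+(v₂^2))*hx3 + (0:ℝ) * hc)
            (by linear_combination E5) (by linear_combination E7 + ((-1:ℝ)*(v₃^2)*(W₂^2) + (-1:ℝ)*(v₂^2)*(W₃^2))*hx1 + ((-1:ℝ)*(v₁^2)*(W₃^2) + (-36:ℝ)*cs^2*(v₃^2) + (96:ℝ)*cs^4*(v₃^2) + (-64:ℝ)*cs^6*(v₃^2))*hx2 + ((-36:ℝ)*cs^2*(v₂^2) + (-4:ℝ)*cs^2*(v₁^2) + (96:ℝ)*cs^4*(v₂^2) + (-64:ℝ)*cs^6*(v₂^2))*hx3 + (0:ℝ) * hc)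
            (by linear_combination E8 - (v₂^2)*(v₃^2)*hx1 - (v₁^2)*(v₃^2)*hx2 - (v₁^2)*(v₂^2)*hx3 + (0:ℝ) * hc) (by linear_combination E9)
        · have hx2 := sub_eq_zero.mp hx2r
          have hx3 : (W₃^2) = (4*cs^2) := by
            linear_combination E1 - hx1 - hx2 + ((5:ℝ) + (20:ℝ)*cs + (-40:ℝ)*cs^2 + (-120:ℝ)*cs^3 + (96:ℝ)*cs^4 + (224:ℝ)*cs^5 + (-64:ℝ)*cs^6 + (-128:ℝ)*cs^7) * hc
          exact forward_core cs ξ₁ ξ₂ ξ₃ ξ₄ ξ₅ (v₃^2) (v₁^2) (v₂^2) hc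
            (by linear_combination E2) (by linear_combination E4 - ((v₂^2)+(v₃^2))*hx1 - ((v₁^2)+(v₃^2))*hx2 - ((v₁^2)+(v₂^2))*hx3 + (0:ℝ) * hc)
            (by linear_combination E5) (by linear_combination E7 + ((-1:ℝ)*(v₃^2)*(W₂^2) + (-1:ℝ)*(v₂^2)*(W₃^2))*hx1 + ((-1:ℝ)*(v₁^2)*(W₃^2) + (-36:ℝ)*cs^2*(v₃^2) + (96:ℝ)*cs^4*(v₃^2) + (-64:ℝ)*cs^6*(v₃^2))*hx2 + ((-36:ℝ)*cs^2*(v₂^2) + (-100:ℝ)*cs^2*(v₁^2) + (96:ℝ)*cs^4*(v₂^2) + (800:ℝ)*cs^4*(v₁^2) + (-64:ℝ)*cs^6*(v₂^2) + (-2240:ℝ)*cs^6*(v₁^2) + (2560:ℝ)*cs^8*(v₁^2) + (-1024:ℝ)*cs^10*(v₁^2))*hx3 + (0:ℝ) * hc)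
            (by linear_combination E8 - (v₂^2)*(v₃^2)*hx1 - (v₁^2)*(v₃^2)*hx2 - (v₁^2)*(v₂^2)*hx3 + (0:ℝ) * hc) (by linear_combination E9)
    · have hx1 := sub_eq_zero.mp hx1r
      have hquad : ((W₂^2) - (4*cs^2))*((W₂^2) - (4*(4*cs^3-3*cs)^2)) = 0 := by
        linear_combination ((W₂^2) + (W₁^2)) * E1 + ((-1:ℝ)) * E3 + ((5:ℝ) + (-1:ℝ)*(W₂^2) + (-1:ℝ)*(W₁^2) + (-100:ℝ)*cs^2 + (800:ℝ)*cs^4 + (-2240:ℝ)*cs^6 + (2560:ℝ)*cs^8 + (-1024:ℝ)*cs^10) * hx1 + ((-6:ℝ) + (5:ℝ)*(W₂^2) + (-24:ℝ)*cs + (20:ℝ)*cs*(W₂^2) + (380:ℝ)*cs^2 + (-40:ℝ)*cs^2*(W₂^2) + (1472:ℝ)*cs^3 + (-120:ℝ)*cs^3*(W₂^2) + (-6256:ℝ)*cs^4 + (96:ℝ)*cs^4*(W₂^2) + (-22176:ℝ)*cs^5 + (224:ℝ)*cs^5*(W₂^2) + (45312:ℝ)*cs^6 + (-64:ℝ)*cs^6*(W₂^2)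 + (142592:ℝ)*cs^7 + (-128:ℝ)*cs^7*(W₂^2) + (-171520:ℝ)*cs^8 + (-478208:ℝ)*cs^9 + (361472:ℝ)*cs^10 + (905216:ℝ)*cs^11 + (-425984:ℝ)*cs^12 + (-974848:ℝ)*cs^13 + (262144:ℝ)*cs^14 + (557056:ℝ)*cs^15 + (-65536:ℝ)*cs^16 + (-131072:ℝ)*cs^17) * hc
      rcases mul_eq_zero.mp hquad with hx2r | hx2r
      · have hx2 := sub_eq_zero.mp hx2r
        have hx3 : (W₃^2) = (4*(4*cs^3-3*cs)^2) := by
          linear_combination E1 - hx1 - hx2 + ((5:ℝ) + (20:ℝ)*cs + (-40:ℝ)*cs^2 + (-120:ℝ)*cs^3 + (96:ℝ)*cs^4 + (224:ℝ)*cs^5 + (-64:ℝ)*cs^6 + (-128:ℝ)*cs^7) * hc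
        exact forward_core cs ξ₁ ξ₂ ξ₃ ξ₄ ξ₅ (v₂^2) (v₃^2) (v₁^2) hc
          (by linear_combination E2) (by linear_combination E4 - ((v₂^2)+(v₃^2))*hx1 - ((v₁^2)+(v₃^2))*hx2 - ((v₁^2)+(v₂^2))*hx3 + (0:ℝ) * hc)
          (by linear_combination E5) (by linear_combination E7 + ((-1:ℝ)*(v₃^2)*(W₂^2) + (-1:ℝ)*(v₂^2)*(W₃^2))*hx1 + ((-1:ℝ)*(v₁^2)*(W₃^2) + (-100:ℝ)*cs^2*(v₃^2) + (800:ℝ)*cs^4*(v₃^2) + (-2240:ℝ)*cs^6*(v₃^2) + (2560:ℝ)*cs^8*(v₃^2) + (-1024:ℝ)*cs^10*(v₃^2))*hx2 + ((-100:ℝ)*cs^2*(v₂^2) + (-4:ℝ)*cs^2*(v₁^2) + (800:ℝ)*cs^4*(v₂^2) + (-2240:ℝ)*cs^6*(v₂^2) + (2560:ℝ)*cs^8*(v₂^2) + (-1024:ℝ)*cs^10*(v₂^2))*hx3 + (0:ℝ) * hc)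
          (by linear_combination E8 - (v₂^2)*(v₃^2)*hx1 - (v₁^2)*(v₃^2)*hx2 - (v₁^2)*(v₂^2)*hx3 + (0:ℝ) * hc) (by linear_combination E9)
      · have hx2 := sub_eq_zero.mp hx2r
        have hx3 : (W₃^2) = (4*cs^2) := by
          linear_combination E1 - hx1 - hx2 + ((5:ℝ) + (20:ℝ)*cs + (-40:ℝ)*cs^2 + (-120:ℝ)*cs^3 + (96:ℝ)*cs^4 + (224:ℝ)*cs^5 + (-64:ℝ)*cs^6 + (-128:ℝ)*cs^7) * hc
        exact forward_core cs ξ₁ ξ₂ ξ₃ ξ₄ ξ₅ (v₃^2) (v₂^2) (v₁^2) hc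
          (by linear_combination E2) (by linear_combination E4 - ((v₂^2)+(v₃^2))*hx1 - ((v₁^2)+(v₃^2))*hx2 - ((v₁^2)+(v₂^2))*hx3 + (0:ℝ) * hc)
          (by linear_combination E5) (by linear_combination E7 + ((-1:ℝ)*(v₃^2)*(W₂^2) + (-1:ℝ)*(v₂^2)*(W₃^2))*hx1 + ((-1:ℝ)*(v₁^2)*(W₃^2) + (-100:ℝ)*cs^2*(v₃^2) + (800:ℝ)*cs^4*(v₃^2) + (-2240:ℝ)*cs^6*(v₃^2) + (2560:ℝ)*cs^8*(v₃^2) + (-1024:ℝ)*cs^10*(v₃^2))*hx2 + ((-100:ℝ)*cs^2*(v₂^2) + (-36:ℝ)*cs^2*(v₁^2) + (800:ℝ)*cs^4*(v₂^2) + (96:ℝ)*cs^4*(v₁^2) + (-2240:ℝ)*cs^6*(v₂^2) + (-64:ℝ)*cs^6*(v₁^2) + (2560:ℝ)*cs^8*(v₂^2) + (-1024:ℝ)*cs^10*(v₂^2))*hx3 + (0:ℝ) * hc)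
          (by linear_combination E8 - (v₂^2)*(v₃^2)*hx1 - (v₁^2)*(v₃^2)*hx2 - (v₁^2)*(v₂^2)*hx3 + (0:ℝ) * hc) (by linear_combination E9)
  · rintro ⟨hT1, hT2, hT3⟩
    set y₁ : ℝ := ((1/7:ℝ)*ξ₅ + (-1/7:ℝ)*ξ₄ + (-1/7:ℝ)*ξ₂ + (1/7:ℝ)*ξ₁ + (-2/7:ℝ)*cs*ξ₅ + (4/7:ℝ)*cs*ξ₃ + (-2/7:ℝ)*cs*ξ₁ + (4/7:ℝ)*cs^2*ξ₅ + (8/7:ℝ)*cs^2*ξ₄ + (4/7:ℝ)*cs^2*ξ₃ + (8/7:ℝ)*cs^2*ξ₂ + (4/7:ℝ)*cs^2*ξ₁) with hy₁def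
    set y₂ : ℝ := ((4/7:ℝ)*ξ₅ + (3/7:ℝ)*ξ₄ + (3/7:ℝ)*ξ₂ + (4/7:ℝ)*ξ₁ + (-4/7:ℝ)*cs*ξ₄ + (-6/7:ℝ)*cs*ξ₃ + (-4/7:ℝ)*cs*ξ₂ + (-4/7:ℝ)*cs^2*ξ₅ + (8/7:ℝ)*cs^2*ξ₃ + (-4/7:ℝ)*cs^2*ξ₁) with hy₂def
    set y₃ : ℝ := ((2/7:ℝ)*ξ₅ + (5/7:ℝ)*ξ₄ + ξ₃ + (5/7:ℝ)*ξ₂ + (2/7:ℝ)*ξ₁ + (2/7:ℝ)*cs*ξ₅ + (4/7:ℝ)*cs*ξ₄ + (2/7:ℝ)*cs*ξ₃ + (4/7:ℝ)*cs*ξ₂ + (2/7:ℝ)*cs*ξ₁ + (-8/7:ℝ)*cs^2*ξ₄ + (-12/7:ℝ)*cs^2*ξ₃ + (-8/7:ℝ)*cs^2*ξ₂) with hy₃def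
    have hsym1 : y₁ + y₂ + y₃ = ξ₁+ξ₂+ξ₃+ξ₄+ξ₅ := by
      rw [hy₁def, hy₂def, hy₃def]; ring
    have hsym2 : y₁*y₂ + y₁*y₃ + y₂*y₃ = ξ₁*ξ₃+ξ₁*ξ₄+ξ₁*ξ₅+ξ₂*ξ₄+ξ₂*ξ₅+ξ₃*ξ₅ := by
      rw [hy₁def, hy₂def, hy₃def]
      linear_combination (1/7:ℝ) * hT1 + ((-2/49:ℝ)*cs*ξ₅^2 + (-4/49:ℝ)*cs*ξ₄*ξ₅ + (-8/49:ℝ)*cs*ξ₄^2 + (2/49:ℝ)*cs*ξ₃*ξ₅ + (-16/49:ℝ)*cs*ξ₃*ξ₄ + (-2/7:ℝ)*cs*ξ₃^2 + (-4/49:ℝ)*cs*ξ₂*ξ₅ + (-16/49:ℝ)*cs*ξ₂*ξ₄ + (-16/49:ℝ)*cs*ξ₂*ξ₃ + (-8/49:ℝ)*cs*ξ₂^2 + (-4/49:ℝ)*cs*ξ₁*ξ₅ + (-4/49:ℝ)*cs*ξ₁*ξ₄ + (2/49:ℝ)*cs*ξ₁*ξ₃ + (-4/49:ℝ)*cs*ξ₁*ξ₂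 + (-2/49:ℝ)*cs*ξ₁^2) * hc
    have hsym3 : y₁*(y₂*y₃) = ξ₁*ξ₃*ξ₅ := by
      rw [hy₁def, hy₂def, hy₃def]
      linear_combination (1/49:ℝ) * hT3 + ((1/343:ℝ)*ξ₅^3 + (4/343:ℝ)*ξ₄*ξ₅^2 + (-4/343:ℝ)*ξ₄^2*ξ₅ + (-8/343:ℝ)*ξ₄^3 + (-4/49:ℝ)*ξ₃*ξ₄*ξ₅ + (-4/49:ℝ)*ξ₃*ξ₄^2 + (-3/49:ℝ)*ξ₃^2*ξ₅ + (-2/49:ℝ)*ξ₃^2*ξ₄ + (1/49:ℝ)*ξ₃^3 + (4/343:ℝ)*ξ₂*ξ₅^2 + (-8/343:ℝ)*ξ₂*ξ₄*ξ₅ + (-24/343:ℝ)*ξ₂*ξ₄^2 + (-4/49:ℝ)*ξ₂*ξ₃*ξ₅ + (-8/49:ℝ)*ξ₂*ξ₃*ξ₄ + (-2/49:ℝ)*ξ₂*ξ₃^2 + (-4/343:ℝ)*ξ₂^2*ξ₅ + (-24/343:ℝ)*ξ₂^2*ξ₄ + (-4/49:ℝ)*ξ₂^2*ξ₃ + (-8/343:ℝ)*ξ₂^3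 + (3/343:ℝ)*ξ₁*ξ₅^2 + (8/343:ℝ)*ξ₁*ξ₄*ξ₅ + (-4/343:ℝ)*ξ₁*ξ₄^2 + (-4/49:ℝ)*ξ₁*ξ₃*ξ₄ + (-3/49:ℝ)*ξ₁*ξ₃^2 + (8/343:ℝ)*ξ₁*ξ₂*ξ₅ + (-8/343:ℝ)*ξ₁*ξ₂*ξ₄ + (-4/49:ℝ)*ξ₁*ξ₂*ξ₃ + (-4/343:ℝ)*ξ₁*ξ₂^2 + (3/343:ℝ)*ξ₁^2*ξ₅ + (4/343:ℝ)*ξ₁^2*ξ₄ + (4/343:ℝ)*ξ₁^2*ξ₂ + (1/343:ℝ)*ξ₁^3 + (-4/343:ℝ)*cs*ξ₅^3 + (-30/343:ℝ)*cs*ξ₄*ξ₅^2 + (-68/343:ℝ)*cs*ξ₄^2*ξ₅ + (-24/343:ℝ)*cs*ξ₄^3 + (-4/49:ℝ)*cs*ξ₃*ξ₅^2 + (-2/7:ℝ)*cs*ξ₃*ξ₄*ξ₅ + (-2/49:ℝ)*cs*ξ₃^2*ξ₅ + (10/49:ℝ)*cs*ξ₃^2*ξ₄ + (4/49:ℝ)*cs*ξ₃^3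 + (-30/343:ℝ)*cs*ξ₂*ξ₅^2 + (-136/343:ℝ)*cs*ξ₂*ξ₄*ξ₅ + (-72/343:ℝ)*cs*ξ₂*ξ₄^2 + (-2/7:ℝ)*cs*ξ₂*ξ₃*ξ₅ + (10/49:ℝ)*cs*ξ₂*ξ₃^2 + (-68/343:ℝ)*cs*ξ₂^2*ξ₅ + (-72/343:ℝ)*cs*ξ₂^2*ξ₄ + (-24/343:ℝ)*cs*ξ₂^3 + (-12/343:ℝ)*cs*ξ₁*ξ₅^2 + (-60/343:ℝ)*cs*ξ₁*ξ₄*ξ₅ + (-68/343:ℝ)*cs*ξ₁*ξ₄^2 + (-8/49:ℝ)*cs*ξ₁*ξ₃*ξ₅ + (-2/7:ℝ)*cs*ξ₁*ξ₃*ξ₄ + (-2/49:ℝ)*cs*ξ₁*ξ₃^2 + (-60/343:ℝ)*cs*ξ₁*ξ₂*ξ₅ + (-136/343:ℝ)*cs*ξ₁*ξ₂*ξ₄ + (-2/7:ℝ)*cs*ξ₁*ξ₂*ξ₃ + (-68/343:ℝ)*cs*ξ₁*ξ₂^2 + (-12/343:ℝ)*cs*ξ₁^2*ξ₅ + (-30/343:ℝ)*cs*ξ₁^2*ξ₄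 + (-4/49:ℝ)*cs*ξ₁^2*ξ₃ + (-30/343:ℝ)*cs*ξ₁^2*ξ₂ + (-4/343:ℝ)*cs*ξ₁^3 + (-4/343:ℝ)*cs^2*ξ₅^3 + (-16/343:ℝ)*cs^2*ξ₄*ξ₅^2 + (16/343:ℝ)*cs^2*ξ₄^2*ξ₅ + (32/343:ℝ)*cs^2*ξ₄^3 + (16/49:ℝ)*cs^2*ξ₃*ξ₄*ξ₅ + (16/49:ℝ)*cs^2*ξ₃*ξ₄^2 + (12/49:ℝ)*cs^2*ξ₃^2*ξ₅ + (8/49:ℝ)*cs^2*ξ₃^2*ξ₄ + (-4/49:ℝ)*cs^2*ξ₃^3 + (-16/343:ℝ)*cs^2*ξ₂*ξ₅^2 + (32/343:ℝ)*cs^2*ξ₂*ξ₄*ξ₅ + (96/343:ℝ)*cs^2*ξ₂*ξ₄^2 + (16/49:ℝ)*cs^2*ξ₂*ξ₃*ξ₅ + (32/49:ℝ)*cs^2*ξ₂*ξ₃*ξ₄ + (8/49:ℝ)*cs^2*ξ₂*ξ₃^2 + (16/343:ℝ)*cs^2*ξ₂^2*ξ₅ + (96/343:ℝ)*cs^2*ξ₂^2*ξ₄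 + (16/49:ℝ)*cs^2*ξ₂^2*ξ₃ + (32/343:ℝ)*cs^2*ξ₂^3 + (-12/343:ℝ)*cs^2*ξ₁*ξ₅^2 + (-32/343:ℝ)*cs^2*ξ₁*ξ₄*ξ₅ + (16/343:ℝ)*cs^2*ξ₁*ξ₄^2 + (16/49:ℝ)*cs^2*ξ₁*ξ₃*ξ₄ + (12/49:ℝ)*cs^2*ξ₁*ξ₃^2 + (-32/343:ℝ)*cs^2*ξ₁*ξ₂*ξ₅ + (32/343:ℝ)*cs^2*ξ₁*ξ₂*ξ₄ + (16/49:ℝ)*cs^2*ξ₁*ξ₂*ξ₃ + (16/343:ℝ)*cs^2*ξ₁*ξ₂^2 + (-12/343:ℝ)*cs^2*ξ₁^2*ξ₅ + (-16/343:ℝ)*cs^2*ξ₁^2*ξ₄ + (-16/343:ℝ)*cs^2*ξ₁^2*ξ₂ + (-4/343:ℝ)*cs^2*ξ₁^3 + (16/343:ℝ)*cs^3*ξ₄*ξ₅^2 + (32/343:ℝ)*cs^3*ξ₄^2*ξ₅ + (24/343:ℝ)*cs^3*ξ₃*ξ₅^2 + (32/343:ℝ)*cs^3*ξ₃*ξ₄*ξ₅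 + (-64/343:ℝ)*cs^3*ξ₃*ξ₄^2 + (-24/343:ℝ)*cs^3*ξ₃^2*ξ₅ + (-128/343:ℝ)*cs^3*ξ₃^2*ξ₄ + (-48/343:ℝ)*cs^3*ξ₃^3 + (16/343:ℝ)*cs^3*ξ₂*ξ₅^2 + (64/343:ℝ)*cs^3*ξ₂*ξ₄*ξ₅ + (32/343:ℝ)*cs^3*ξ₂*ξ₃*ξ₅ + (-128/343:ℝ)*cs^3*ξ₂*ξ₃*ξ₄ + (-128/343:ℝ)*cs^3*ξ₂*ξ₃^2 + (32/343:ℝ)*cs^3*ξ₂^2*ξ₅ + (-64/343:ℝ)*cs^3*ξ₂^2*ξ₃ + (32/343:ℝ)*cs^3*ξ₁*ξ₄*ξ₅ + (32/343:ℝ)*cs^3*ξ₁*ξ₄^2 + (48/343:ℝ)*cs^3*ξ₁*ξ₃*ξ₅ + (32/343:ℝ)*cs^3*ξ₁*ξ₃*ξ₄ + (-24/343:ℝ)*cs^3*ξ₁*ξ₃^2 + (32/343:ℝ)*cs^3*ξ₁*ξ₂*ξ₅ + (64/343:ℝ)*cs^3*ξ₁*ξ₂*ξ₄ + (32/343:ℝ)*cs^3*ξ₁*ξ₂*ξ₃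 + (32/343:ℝ)*cs^3*ξ₁*ξ₂^2 + (16/343:ℝ)*cs^3*ξ₁^2*ξ₄ + (24/343:ℝ)*cs^3*ξ₁^2*ξ₃ + (16/343:ℝ)*cs^3*ξ₁^2*ξ₂) * hc
    obtain ⟨hY1, hY2, hY3⟩ := nonneg3 y₁ y₂ y₃
      (by rw [hsym1]; linarith)
      (by rw [hsym2]; linarith [mul_nonneg hg1 hg3, mul_nonneg hg1 hg4, mul_nonneg hg1 hg5,
          mul_nonneg hg2 hg4, mul_nonneg hg2 hg5, mul_nonneg hg3 hg5])
      (by rw [show y₁*y₂*y₃ = y₁*(y₂*y₃) by ring, hsym3]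
          exact mul_nonneg (mul_nonneg hg1 hg3) hg5)
    refine ⟨2*cs, 2*(4*cs^3-3*cs), 2*(16*cs^5-20*cs^3+5*cs),
      Real.sqrt y₁, Real.sqrt y₂, Real.sqrt y₃, fun θ lam => ?_⟩
    rw [key θ lam, Complex.ofReal_inj, Real.sq_sqrt hY1, Real.sq_sqrt hY2, Real.sq_sqrt hY3,
      hy₁def, hy₂def, hy₃def]
    linear_combination (-1/7:ℝ)*lam^2 * hT1 + (1/7:ℝ)*(Real.cos θ ^ 2) * hT2
      + (1/49:ℝ) * hT3 + ((-5:ℝ)*(Real.cos θ ^ 2)*lam^4 + (6:ℝ)*(Real.cos θ ^ 2)^2*lam^2 + (-1:ℝ)*(Real.cos θ ^ 2)^3 + (3:ℝ)*ξ₅*(Real.cos θ ^ 2)*lam^2 + (-1:ℝ)*ξ₅*(Real.cos θ ^ 2)^2 + (-2/7:ℝ)*ξ₅^2*(Real.cos θ ^ 2) + (1/343:ℝ)*ξ₅^3 + (2:ℝ)*ξ₄*(Real.cos θ ^ 2)*lam^2 + (-1/7:ℝ)*ξ₄*ξ₅*(Real.cos θ ^ 2) + (4/343:ℝ)*ξ₄*ξ₅^2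 + (1/7:ℝ)*ξ₄^2*(Real.cos θ ^ 2) + (-4/343:ℝ)*ξ₄^2*ξ₅ + (-8/343:ℝ)*ξ₄^3 + (2:ℝ)*ξ₃*(Real.cos θ ^ 2)*lam^2 + (-1:ℝ)*ξ₃*(Real.cos θ ^ 2)^2 + (-4/7:ℝ)*ξ₃*ξ₅*(Real.cos θ ^ 2) + (-2/7:ℝ)*ξ₃*ξ₄*(Real.cos θ ^ 2) + (-4/49:ℝ)*ξ₃*ξ₄*ξ₅ + (-4/49:ℝ)*ξ₃*ξ₄^2 + (-1/7:ℝ)*ξ₃^2*(Real.cos θ ^ 2) + (-3/49:ℝ)*ξ₃^2*ξ₅ + (-2/49:ℝ)*ξ₃^2*ξ₄ + (1/49:ℝ)*ξ₃^3 + (2:ℝ)*ξ₂*(Real.cos θ ^ 2)*lam^2 + (-1/7:ℝ)*ξ₂*ξ₅*(Real.cos θ ^ 2) + (4/343:ℝ)*ξ₂*ξ₅^2 + (2/7:ℝ)*ξ₂*ξ₄*(Real.cos θ ^ 2) + (-8/343:ℝ)*ξ₂*ξ₄*ξ₅ + (-24/343:ℝ)*ξ₂*ξ₄^2 + (-2/7:ℝ)*ξ₂*ξ₃*(Real.cos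 θ ^ 2) + (-4/49:ℝ)*ξ₂*ξ₃*ξ₅ + (-8/49:ℝ)*ξ₂*ξ₃*ξ₄ + (-2/49:ℝ)*ξ₂*ξ₃^2 + (1/7:ℝ)*ξ₂^2*(Real.cos θ ^ 2) + (-4/343:ℝ)*ξ₂^2*ξ₅ + (-24/343:ℝ)*ξ₂^2*ξ₄ + (-4/49:ℝ)*ξ₂^2*ξ₃ + (-8/343:ℝ)*ξ₂^3 + (3:ℝ)*ξ₁*(Real.cos θ ^ 2)*lam^2 + (-1:ℝ)*ξ₁*(Real.cos θ ^ 2)^2 + (-4/7:ℝ)*ξ₁*ξ₅*(Real.cos θ ^ 2) + (3/343:ℝ)*ξ₁*ξ₅^2 + (-1/7:ℝ)*ξ₁*ξ₄*(Real.cos θ ^ 2) + (8/343:ℝ)*ξ₁*ξ₄*ξ₅ + (-4/343:ℝ)*ξ₁*ξ₄^2 + (-4/7:ℝ)*ξ₁*ξ₃*(Real.cos θ ^ 2) + (-4/49:ℝ)*ξ₁*ξ₃*ξ₄ + (-3/49:ℝ)*ξ₁*ξ₃^2 + (-1/7:ℝ)*ξ₁*ξ₂*(Real.cos θ ^ 2)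 + (8/343:ℝ)*ξ₁*ξ₂*ξ₅ + (-8/343:ℝ)*ξ₁*ξ₂*ξ₄ + (-4/49:ℝ)*ξ₁*ξ₂*ξ₃ + (-4/343:ℝ)*ξ₁*ξ₂^2 + (-2/7:ℝ)*ξ₁^2*(Real.cos θ ^ 2) + (3/343:ℝ)*ξ₁^2*ξ₅ + (4/343:ℝ)*ξ₁^2*ξ₄ + (4/343:ℝ)*ξ₁^2*ξ₂ + (1/343:ℝ)*ξ₁^3 + (-20:ℝ)*cs*(Real.cos θ ^ 2)*lam^4 + (24:ℝ)*cs*(Real.cos θ ^ 2)^2*lam^2 + (-4:ℝ)*cs*(Real.cos θ ^ 2)^3 + (12:ℝ)*cs*ξ₅*(Real.cos θ ^ 2)*lam^2 + (-4:ℝ)*cs*ξ₅*(Real.cos θ ^ 2)^2 + (2/49:ℝ)*cs*ξ₅^2*lam^2 + (-8/7:ℝ)*cs*ξ₅^2*(Real.cos θ ^ 2) + (-4/343:ℝ)*cs*ξ₅^3 + (8:ℝ)*cs*ξ₄*(Real.cos θ ^ 2)*lam^2 + (4/49:ℝ)*cs*ξ₄*ξ₅*lam^2 + (-4/7:ℝ)*cs*ξ₄*ξ₅*(Real.cos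 θ ^ 2) + (-30/343:ℝ)*cs*ξ₄*ξ₅^2 + (8/49:ℝ)*cs*ξ₄^2*lam^2 + (4/7:ℝ)*cs*ξ₄^2*(Real.cos θ ^ 2) + (-68/343:ℝ)*cs*ξ₄^2*ξ₅ + (-24/343:ℝ)*cs*ξ₄^3 + (8:ℝ)*cs*ξ₃*(Real.cos θ ^ 2)*lam^2 + (-4:ℝ)*cs*ξ₃*(Real.cos θ ^ 2)^2 + (-2/49:ℝ)*cs*ξ₃*ξ₅*lam^2 + (-16/7:ℝ)*cs*ξ₃*ξ₅*(Real.cos θ ^ 2) + (-4/49:ℝ)*cs*ξ₃*ξ₅^2 + (16/49:ℝ)*cs*ξ₃*ξ₄*lam^2 + (-8/7:ℝ)*cs*ξ₃*ξ₄*(Real.cos θ ^ 2) + (-2/7:ℝ)*cs*ξ₃*ξ₄*ξ₅ + (2/7:ℝ)*cs*ξ₃^2*lam^2 + (-4/7:ℝ)*cs*ξ₃^2*(Real.cos θ ^ 2) + (-2/49:ℝ)*cs*ξ₃^2*ξ₅ + (10/49:ℝ)*cs*ξ₃^2*ξ₄ + (4/49:ℝ)*cs*ξ₃^3 + (8:ℝ)*cs*ξ₂*(Real.cos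 θ ^ 2)*lam^2 + (4/49:ℝ)*cs*ξ₂*ξ₅*lam^2 + (-4/7:ℝ)*cs*ξ₂*ξ₅*(Real.cos θ ^ 2) + (-30/343:ℝ)*cs*ξ₂*ξ₅^2 + (16/49:ℝ)*cs*ξ₂*ξ₄*lam^2 + (8/7:ℝ)*cs*ξ₂*ξ₄*(Real.cos θ ^ 2) + (-136/343:ℝ)*cs*ξ₂*ξ₄*ξ₅ + (-72/343:ℝ)*cs*ξ₂*ξ₄^2 + (16/49:ℝ)*cs*ξ₂*ξ₃*lam^2 + (-8/7:ℝ)*cs*ξ₂*ξ₃*(Real.cos θ ^ 2) + (-2/7:ℝ)*cs*ξ₂*ξ₃*ξ₅ + (10/49:ℝ)*cs*ξ₂*ξ₃^2 + (8/49:ℝ)*cs*ξ₂^2*lam^2 + (4/7:ℝ)*cs*ξ₂^2*(Real.cos θ ^ 2) + (-68/343:ℝ)*cs*ξ₂^2*ξ₅ + (-72/343:ℝ)*cs*ξ₂^2*ξ₄ + (-24/343:ℝ)*cs*ξ₂^3 + (12:ℝ)*cs*ξ₁*(Real.cos θ ^ 2)*lam^2 + (-4:ℝ)*cs*ξ₁*(Real.cos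 θ ^ 2)^2 + (4/49:ℝ)*cs*ξ₁*ξ₅*lam^2 + (-16/7:ℝ)*cs*ξ₁*ξ₅*(Real.cos θ ^ 2) + (-12/343:ℝ)*cs*ξ₁*ξ₅^2 + (4/49:ℝ)*cs*ξ₁*ξ₄*lam^2 + (-4/7:ℝ)*cs*ξ₁*ξ₄*(Real.cos θ ^ 2) + (-60/343:ℝ)*cs*ξ₁*ξ₄*ξ₅ + (-68/343:ℝ)*cs*ξ₁*ξ₄^2 + (-2/49:ℝ)*cs*ξ₁*ξ₃*lam^2 + (-16/7:ℝ)*cs*ξ₁*ξ₃*(Real.cos θ ^ 2) + (-8/49:ℝ)*cs*ξ₁*ξ₃*ξ₅ + (-2/7:ℝ)*cs*ξ₁*ξ₃*ξ₄ + (-2/49:ℝ)*cs*ξ₁*ξ₃^2 + (4/49:ℝ)*cs*ξ₁*ξ₂*lam^2 + (-4/7:ℝ)*cs*ξ₁*ξ₂*(Real.cos θ ^ 2) + (-60/343:ℝ)*cs*ξ₁*ξ₂*ξ₅ + (-136/343:ℝ)*cs*ξ₁*ξ₂*ξ₄ + (-2/7:ℝ)*cs*ξ₁*ξ₂*ξ₃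 + (-68/343:ℝ)*cs*ξ₁*ξ₂^2 + (2/49:ℝ)*cs*ξ₁^2*lam^2 + (-8/7:ℝ)*cs*ξ₁^2*(Real.cos θ ^ 2) + (-12/343:ℝ)*cs*ξ₁^2*ξ₅ + (-30/343:ℝ)*cs*ξ₁^2*ξ₄ + (-4/49:ℝ)*cs*ξ₁^2*ξ₃ + (-30/343:ℝ)*cs*ξ₁^2*ξ₂ + (-4/343:ℝ)*cs*ξ₁^3 + (40:ℝ)*cs^2*(Real.cos θ ^ 2)*lam^4 + (120:ℝ)*cs^2*(Real.cos θ ^ 2)^2*lam^2 + (-20:ℝ)*cs^2*(Real.cos θ ^ 2)^3 + (-212/7:ℝ)*cs^2*ξ₅*(Real.cos θ ^ 2)*lam^2 + (-20:ℝ)*cs^2*ξ₅*(Real.cos θ ^ 2)^2 + (32/7:ℝ)*cs^2*ξ₅^2*(Real.cos θ ^ 2) + (-4/343:ℝ)*cs^2*ξ₅^3 + (-96/7:ℝ)*cs^2*ξ₄*(Real.cos θ ^ 2)*lam^2 + (-4/7:ℝ)*cs^2*ξ₄*ξ₅*(Real.cos θ ^ 2) + (-16/343:ℝ)*cs^2*ξ₄*ξ₅^2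 + (-40/7:ℝ)*cs^2*ξ₄^2*(Real.cos θ ^ 2) + (16/343:ℝ)*cs^2*ξ₄^2*ξ₅ + (32/343:ℝ)*cs^2*ξ₄^3 + (-20:ℝ)*cs^2*ξ₃*(Real.cos θ ^ 2)^2 + (-4:ℝ)*cs^2*ξ₃*ξ₅*(Real.cos θ ^ 2) + (-64/7:ℝ)*cs^2*ξ₃*ξ₄*(Real.cos θ ^ 2) + (16/49:ℝ)*cs^2*ξ₃*ξ₄*ξ₅ + (16/49:ℝ)*cs^2*ξ₃*ξ₄^2 + (-20/7:ℝ)*cs^2*ξ₃^2*(Real.cos θ ^ 2) + (12/49:ℝ)*cs^2*ξ₃^2*ξ₅ + (8/49:ℝ)*cs^2*ξ₃^2*ξ₄ + (-4/49:ℝ)*cs^2*ξ₃^3 + (-96/7:ℝ)*cs^2*ξ₂*(Real.cos θ ^ 2)*lam^2 + (-4/7:ℝ)*cs^2*ξ₂*ξ₅*(Real.cos θ ^ 2) + (-16/343:ℝ)*cs^2*ξ₂*ξ₅^2 + (-80/7:ℝ)*cs^2*ξ₂*ξ₄*(Real.cos θ ^ 2) + (32/343:ℝ)*cs^2*ξ₂*ξ₄*ξ₅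 + (96/343:ℝ)*cs^2*ξ₂*ξ₄^2 + (-64/7:ℝ)*cs^2*ξ₂*ξ₃*(Real.cos θ ^ 2) + (16/49:ℝ)*cs^2*ξ₂*ξ₃*ξ₅ + (32/49:ℝ)*cs^2*ξ₂*ξ₃*ξ₄ + (8/49:ℝ)*cs^2*ξ₂*ξ₃^2 + (-40/7:ℝ)*cs^2*ξ₂^2*(Real.cos θ ^ 2) + (16/343:ℝ)*cs^2*ξ₂^2*ξ₅ + (96/343:ℝ)*cs^2*ξ₂^2*ξ₄ + (16/49:ℝ)*cs^2*ξ₂^2*ξ₃ + (32/343:ℝ)*cs^2*ξ₂^3 + (-212/7:ℝ)*cs^2*ξ₁*(Real.cos θ ^ 2)*lam^2 + (-20:ℝ)*cs^2*ξ₁*(Real.cos θ ^ 2)^2 + (64/7:ℝ)*cs^2*ξ₁*ξ₅*(Real.cos θ ^ 2) + (-12/343:ℝ)*cs^2*ξ₁*ξ₅^2 + (-4/7:ℝ)*cs^2*ξ₁*ξ₄*(Real.cos θ ^ 2) + (-32/343:ℝ)*cs^2*ξ₁*ξ₄*ξ₅ + (16/343:ℝ)*cs^2*ξ₁*ξ₄^2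 + (-4:ℝ)*cs^2*ξ₁*ξ₃*(Real.cos θ ^ 2) + (16/49:ℝ)*cs^2*ξ₁*ξ₃*ξ₄ + (12/49:ℝ)*cs^2*ξ₁*ξ₃^2 + (-4/7:ℝ)*cs^2*ξ₁*ξ₂*(Real.cos θ ^ 2) + (-32/343:ℝ)*cs^2*ξ₁*ξ₂*ξ₅ + (32/343:ℝ)*cs^2*ξ₁*ξ₂*ξ₄ + (16/49:ℝ)*cs^2*ξ₁*ξ₂*ξ₃ + (16/343:ℝ)*cs^2*ξ₁*ξ₂^2 + (32/7:ℝ)*cs^2*ξ₁^2*(Real.cos θ ^ 2) + (-12/343:ℝ)*cs^2*ξ₁^2*ξ₅ + (-16/343:ℝ)*cs^2*ξ₁^2*ξ₄ + (-16/343:ℝ)*cs^2*ξ₁^2*ξ₂ + (-4/343:ℝ)*cs^2*ξ₁^3 + (120:ℝ)*cs^3*(Real.cos θ ^ 2)*lam^4 + (528:ℝ)*cs^3*(Real.cos θ ^ 2)^2*lam^2 + (-88:ℝ)*cs^3*(Real.cos θ ^ 2)^3 + (-488/7:ℝ)*cs^3*ξ₅*(Real.cos θ ^ 2)*lam^2 +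 (-88:ℝ)*cs^3*ξ₅*(Real.cos θ ^ 2)^2 + (-8/7:ℝ)*cs^3*ξ₅^2*(Real.cos θ ^ 2) + (-16/7:ℝ)*cs^3*ξ₄*(Real.cos θ ^ 2)*lam^2 + (-200/7:ℝ)*cs^3*ξ₄*ξ₅*(Real.cos θ ^ 2) + (16/343:ℝ)*cs^3*ξ₄*ξ₅^2 + (-120/7:ℝ)*cs^3*ξ₄^2*(Real.cos θ ^ 2) + (32/343:ℝ)*cs^3*ξ₄^2*ξ₅ + (16:ℝ)*cs^3*ξ₃*(Real.cos θ ^ 2)*lam^2 + (-88:ℝ)*cs^3*ξ₃*(Real.cos θ ^ 2)^2 + (-24/7:ℝ)*cs^3*ξ₃*ξ₅*(Real.cos θ ^ 2) + (24/343:ℝ)*cs^3*ξ₃*ξ₅^2 + (48/7:ℝ)*cs^3*ξ₃*ξ₄*(Real.cos θ ^ 2) + (32/343:ℝ)*cs^3*ξ₃*ξ₄*ξ₅ + (-64/343:ℝ)*cs^3*ξ₃*ξ₄^2 + (32/7:ℝ)*cs^3*ξ₃^2*(Real.cos θ ^ 2) + (-24/343:ℝ)*cs^3*ξ₃^2*ξ₅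 + (-128/343:ℝ)*cs^3*ξ₃^2*ξ₄ + (-48/343:ℝ)*cs^3*ξ₃^3 + (-16/7:ℝ)*cs^3*ξ₂*(Real.cos θ ^ 2)*lam^2 + (-200/7:ℝ)*cs^3*ξ₂*ξ₅*(Real.cos θ ^ 2) + (16/343:ℝ)*cs^3*ξ₂*ξ₅^2 + (-240/7:ℝ)*cs^3*ξ₂*ξ₄*(Real.cos θ ^ 2) + (64/343:ℝ)*cs^3*ξ₂*ξ₄*ξ₅ + (48/7:ℝ)*cs^3*ξ₂*ξ₃*(Real.cos θ ^ 2) + (32/343:ℝ)*cs^3*ξ₂*ξ₃*ξ₅ + (-128/343:ℝ)*cs^3*ξ₂*ξ₃*ξ₄ + (-128/343:ℝ)*cs^3*ξ₂*ξ₃^2 + (-120/7:ℝ)*cs^3*ξ₂^2*(Real.cos θ ^ 2) + (32/343:ℝ)*cs^3*ξ₂^2*ξ₅ + (-64/343:ℝ)*cs^3*ξ₂^2*ξ₃ + (-488/7:ℝ)*cs^3*ξ₁*(Real.cos θ ^ 2)*lam^2 + (-88:ℝ)*cs^3*ξ₁*(Real.cos θ ^ 2)^2 + (-16/7:ℝ)*cs^3*ξ₁*ξ₅*(Real.cos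 θ ^ 2) + (-200/7:ℝ)*cs^3*ξ₁*ξ₄*(Real.cos θ ^ 2) + (32/343:ℝ)*cs^3*ξ₁*ξ₄*ξ₅ + (32/343:ℝ)*cs^3*ξ₁*ξ₄^2 + (-24/7:ℝ)*cs^3*ξ₁*ξ₃*(Real.cos θ ^ 2) + (48/343:ℝ)*cs^3*ξ₁*ξ₃*ξ₅ + (32/343:ℝ)*cs^3*ξ₁*ξ₃*ξ₄ + (-24/343:ℝ)*cs^3*ξ₁*ξ₃^2 + (-200/7:ℝ)*cs^3*ξ₁*ξ₂*(Real.cos θ ^ 2) + (32/343:ℝ)*cs^3*ξ₁*ξ₂*ξ₅ + (64/343:ℝ)*cs^3*ξ₁*ξ₂*ξ₄ + (32/343:ℝ)*cs^3*ξ₁*ξ₂*ξ₃ + (32/343:ℝ)*cs^3*ξ₁*ξ₂^2 + (-8/7:ℝ)*cs^3*ξ₁^2*(Real.cos θ ^ 2) + (16/343:ℝ)*cs^3*ξ₁^2*ξ₄ + (24/343:ℝ)*cs^3*ξ₁^2*ξ₃ + (16/343:ℝ)*cs^3*ξ₁^2*ξ₂ + (-96:ℝ)*cs^4*(Real.cos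 θ ^ 2)*lam^4 + (-1744:ℝ)*cs^4*(Real.cos θ ^ 2)^2*lam^2 + (-400:ℝ)*cs^4*(Real.cos θ ^ 2)^3 + (688/7:ℝ)*cs^4*ξ₅*(Real.cos θ ^ 2)*lam^2 + (384:ℝ)*cs^4*ξ₅*(Real.cos θ ^ 2)^2 + (-960/49:ℝ)*cs^4*ξ₅^2*(Real.cos θ ^ 2) + (320/7:ℝ)*cs^4*ξ₄*(Real.cos θ ^ 2)*lam^2 + (-240:ℝ)*cs^4*ξ₄*(Real.cos θ ^ 2)^2 + (1104/49:ℝ)*cs^4*ξ₄*ξ₅*(Real.cos θ ^ 2) + (2144/49:ℝ)*cs^4*ξ₄^2*(Real.cos θ ^ 2) + (-32:ℝ)*cs^4*ξ₃*(Real.cos θ ^ 2)*lam^2 + (-256:ℝ)*cs^4*ξ₃*(Real.cos θ ^ 2)^2 + (3088/49:ℝ)*cs^4*ξ₃*ξ₅*(Real.cos θ ^ 2) + (3104/49:ℝ)*cs^4*ξ₃*ξ₄*(Real.cos θ ^ 2) + (-368/49:ℝ)*cs^4*ξ₃^2*(Real.cos θ ^ 2) + (320/7:ℝ)*cs^4*ξ₂*(Real.cos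 θ ^ 2)*lam^2 + (-240:ℝ)*cs^4*ξ₂*(Real.cos θ ^ 2)^2 + (1104/49:ℝ)*cs^4*ξ₂*ξ₅*(Real.cos θ ^ 2) + (4288/49:ℝ)*cs^4*ξ₂*ξ₄*(Real.cos θ ^ 2) + (3104/49:ℝ)*cs^4*ξ₂*ξ₃*(Real.cos θ ^ 2) + (2144/49:ℝ)*cs^4*ξ₂^2*(Real.cos θ ^ 2) + (688/7:ℝ)*cs^4*ξ₁*(Real.cos θ ^ 2)*lam^2 + (384:ℝ)*cs^4*ξ₁*(Real.cos θ ^ 2)^2 + (-1920/49:ℝ)*cs^4*ξ₁*ξ₅*(Real.cos θ ^ 2) + (1104/49:ℝ)*cs^4*ξ₁*ξ₄*(Real.cos θ ^ 2) + (3088/49:ℝ)*cs^4*ξ₁*ξ₃*(Real.cos θ ^ 2) + (1104/49:ℝ)*cs^4*ξ₁*ξ₂*(Real.cos θ ^ 2) + (-960/49:ℝ)*cs^4*ξ₁^2*(Real.cos θ ^ 2) + (-224:ℝ)*cs^5*(Real.cos θ ^ 2)*lam^4 + (-5824:ℝ)*cs^5*(Real.cos θ ^ 2)^2*lam^2 +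 (-1792:ℝ)*cs^5*(Real.cos θ ^ 2)^3 + (128:ℝ)*cs^5*ξ₅*(Real.cos θ ^ 2)*lam^2 + (2496/7:ℝ)*cs^5*ξ₅*(Real.cos θ ^ 2)^2 + (256/7:ℝ)*cs^5*ξ₅^2*(Real.cos θ ^ 2) + (-832/7:ℝ)*cs^5*ξ₄*(Real.cos θ ^ 2)*lam^2 + (-7744/7:ℝ)*cs^5*ξ₄*(Real.cos θ ^ 2)^2 + (7872/49:ℝ)*cs^5*ξ₄*ξ₅*(Real.cos θ ^ 2) + (2720/49:ℝ)*cs^5*ξ₄^2*(Real.cos θ ^ 2) + (-1472/7:ℝ)*cs^5*ξ₃*(Real.cos θ ^ 2)*lam^2 + (3776/7:ℝ)*cs^5*ξ₃*(Real.cos θ ^ 2)^2 + (1504/49:ℝ)*cs^5*ξ₃*ξ₅*(Real.cos θ ^ 2) + (-4672/49:ℝ)*cs^5*ξ₃*ξ₄*(Real.cos θ ^ 2) + (-2432/49:ℝ)*cs^5*ξ₃^2*(Real.cos θ ^ 2) + (-832/7:ℝ)*cs^5*ξ₂*(Real.cos θ ^ 2)*lam^2 + (-7744/7:ℝ)*cs^5*ξ₂*(Real.cos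 θ ^ 2)^2 + (7872/49:ℝ)*cs^5*ξ₂*ξ₅*(Real.cos θ ^ 2) + (5440/49:ℝ)*cs^5*ξ₂*ξ₄*(Real.cos θ ^ 2) + (-4672/49:ℝ)*cs^5*ξ₂*ξ₃*(Real.cos θ ^ 2) + (2720/49:ℝ)*cs^5*ξ₂^2*(Real.cos θ ^ 2) + (128:ℝ)*cs^5*ξ₁*(Real.cos θ ^ 2)*lam^2 + (2496/7:ℝ)*cs^5*ξ₁*(Real.cos θ ^ 2)^2 + (512/7:ℝ)*cs^5*ξ₁*ξ₅*(Real.cos θ ^ 2) + (7872/49:ℝ)*cs^5*ξ₁*ξ₄*(Real.cos θ ^ 2) + (1504/49:ℝ)*cs^5*ξ₁*ξ₃*(Real.cos θ ^ 2) + (7872/49:ℝ)*cs^5*ξ₁*ξ₂*(Real.cos θ ^ 2) + (256/7:ℝ)*cs^5*ξ₁^2*(Real.cos θ ^ 2) + (64:ℝ)*cs^6*(Real.cos θ ^ 2)*lam^4 + (7488:ℝ)*cs^6*(Real.cos θ ^ 2)^2*lam^2 + (6336:ℝ)*cs^6*(Real.cos θ ^ 2)^3 + (-768/7:ℝ)*cs^6*ξ₅*(Real.cos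 θ ^ 2)*lam^2 + (-13504/7:ℝ)*cs^6*ξ₅*(Real.cos θ ^ 2)^2 + (1280/49:ℝ)*cs^6*ξ₅^2*(Real.cos θ ^ 2) + (-256/7:ℝ)*cs^6*ξ₄*(Real.cos θ ^ 2)*lam^2 + (16832/7:ℝ)*cs^6*ξ₄*(Real.cos θ ^ 2)^2 + (-5888/49:ℝ)*cs^6*ξ₄*ξ₅*(Real.cos θ ^ 2) + (-6976/49:ℝ)*cs^6*ξ₄^2*(Real.cos θ ^ 2) + (704/7:ℝ)*cs^6*ξ₃*(Real.cos θ ^ 2)*lam^2 + (26048/7:ℝ)*cs^6*ξ₃*(Real.cos θ ^ 2)^2 + (-11264/49:ℝ)*cs^6*ξ₃*ξ₅*(Real.cos θ ^ 2) + (-8256/49:ℝ)*cs^6*ξ₃*ξ₄*(Real.cos θ ^ 2) + (3840/49:ℝ)*cs^6*ξ₃^2*(Real.cos θ ^ 2) + (-256/7:ℝ)*cs^6*ξ₂*(Real.cos θ ^ 2)*lam^2 + (16832/7:ℝ)*cs^6*ξ₂*(Real.cos θ ^ 2)^2 + (-5888/49:ℝ)*cs^6*ξ₂*ξ₅*(Real.cos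 θ ^ 2) + (-13952/49:ℝ)*cs^6*ξ₂*ξ₄*(Real.cos θ ^ 2) + (-8256/49:ℝ)*cs^6*ξ₂*ξ₃*(Real.cos θ ^ 2) + (-6976/49:ℝ)*cs^6*ξ₂^2*(Real.cos θ ^ 2) + (-768/7:ℝ)*cs^6*ξ₁*(Real.cos θ ^ 2)*lam^2 + (-13504/7:ℝ)*cs^6*ξ₁*(Real.cos θ ^ 2)^2 + (2560/49:ℝ)*cs^6*ξ₁*ξ₅*(Real.cos θ ^ 2) + (-5888/49:ℝ)*cs^6*ξ₁*ξ₄*(Real.cos θ ^ 2) + (-11264/49:ℝ)*cs^6*ξ₁*ξ₃*(Real.cos θ ^ 2) + (-5888/49:ℝ)*cs^6*ξ₁*ξ₂*(Real.cos θ ^ 2) + (1280/49:ℝ)*cs^6*ξ₁^2*(Real.cos θ ^ 2) + (128:ℝ)*cs^7*(Real.cos θ ^ 2)*lam^4 + (20608:ℝ)*cs^7*(Real.cos θ ^ 2)^2*lam^2 + (21376:ℝ)*cs^7*(Real.cos θ ^ 2)^3 + (-512/7:ℝ)*cs^7*ξ₅*(Real.cos θ ^ 2)*lam^2 + (10496/7:ℝ)*cs^7*ξ₅*(Real.cos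 θ ^ 2)^2 + (-5248/49:ℝ)*cs^7*ξ₅^2*(Real.cos θ ^ 2) + (256:ℝ)*cs^7*ξ₄*(Real.cos θ ^ 2)*lam^2 + (61056/7:ℝ)*cs^7*ξ₄*(Real.cos θ ^ 2)^2 + (-15616/49:ℝ)*cs^7*ξ₄*ξ₅*(Real.cos θ ^ 2) + (-2944/49:ℝ)*cs^7*ξ₄^2*(Real.cos θ ^ 2) + (2816/7:ℝ)*cs^7*ξ₃*(Real.cos θ ^ 2)*lam^2 + (-1536/7:ℝ)*cs^7*ξ₃*(Real.cos θ ^ 2)^2 + (-640/49:ℝ)*cs^7*ξ₃*ξ₅*(Real.cos θ ^ 2) + (2304/7:ℝ)*cs^7*ξ₃*ξ₄*(Real.cos θ ^ 2) + (7808/49:ℝ)*cs^7*ξ₃^2*(Real.cos θ ^ 2) + (256:ℝ)*cs^7*ξ₂*(Real.cos θ ^ 2)*lam^2 + (61056/7:ℝ)*cs^7*ξ₂*(Real.cos θ ^ 2)^2 + (-15616/49:ℝ)*cs^7*ξ₂*ξ₅*(Real.cos θ ^ 2) + (-5888/49:ℝ)*cs^7*ξ₂*ξ₄*(Real.cos θ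 ^ 2) + (2304/7:ℝ)*cs^7*ξ₂*ξ₃*(Real.cos θ ^ 2) + (-2944/49:ℝ)*cs^7*ξ₂^2*(Real.cos θ ^ 2) + (-512/7:ℝ)*cs^7*ξ₁*(Real.cos θ ^ 2)*lam^2 + (10496/7:ℝ)*cs^7*ξ₁*(Real.cos θ ^ 2)^2 + (-10496/49:ℝ)*cs^7*ξ₁*ξ₅*(Real.cos θ ^ 2) + (-15616/49:ℝ)*cs^7*ξ₁*ξ₄*(Real.cos θ ^ 2) + (-640/49:ℝ)*cs^7*ξ₁*ξ₃*(Real.cos θ ^ 2) + (-15616/49:ℝ)*cs^7*ξ₁*ξ₂*(Real.cos θ ^ 2) + (-5248/49:ℝ)*cs^7*ξ₁^2*(Real.cos θ ^ 2) + (-14080:ℝ)*cs^8*(Real.cos θ ^ 2)^2*lam^2 + (-28416:ℝ)*cs^8*(Real.cos θ ^ 2)^3 + (256/7:ℝ)*cs^8*ξ₅*(Real.cos θ ^ 2)*lam^2 + (27392/7:ℝ)*cs^8*ξ₅*(Real.cos θ ^ 2)^2 + (-512/49:ℝ)*cs^8*ξ₅^2*(Real.cos θ ^ 2) + (-9472:ℝ)*cs^8*ξ₄*(Real.cos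 θ ^ 2)^2 + (1280/7:ℝ)*cs^8*ξ₄*ξ₅*(Real.cos θ ^ 2) + (9216/49:ℝ)*cs^8*ξ₄^2*(Real.cos θ ^ 2) + (-512/7:ℝ)*cs^8*ξ₃*(Real.cos θ ^ 2)*lam^2 + (-104960/7:ℝ)*cs^8*ξ₃*(Real.cos θ ^ 2)^2 + (14592/49:ℝ)*cs^8*ξ₃*ξ₅*(Real.cos θ ^ 2) + (9728/49:ℝ)*cs^8*ξ₃*ξ₄*(Real.cos θ ^ 2) + (-6400/49:ℝ)*cs^8*ξ₃^2*(Real.cos θ ^ 2) + (-9472:ℝ)*cs^8*ξ₂*(Real.cos θ ^ 2)^2 + (1280/7:ℝ)*cs^8*ξ₂*ξ₅*(Real.cos θ ^ 2) + (18432/49:ℝ)*cs^8*ξ₂*ξ₄*(Real.cos θ ^ 2) + (9728/49:ℝ)*cs^8*ξ₂*ξ₃*(Real.cos θ ^ 2) + (9216/49:ℝ)*cs^8*ξ₂^2*(Real.cos θ ^ 2) + (256/7:ℝ)*cs^8*ξ₁*(Real.cos θ ^ 2)*lam^2 + (27392/7:ℝ)*cs^8*ξ₁*(Real.cos θ ^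 2)^2 + (-1024/49:ℝ)*cs^8*ξ₁*ξ₅*(Real.cos θ ^ 2) + (1280/7:ℝ)*cs^8*ξ₁*ξ₄*(Real.cos θ ^ 2) + (14592/49:ℝ)*cs^8*ξ₁*ξ₃*(Real.cos θ ^ 2) + (1280/7:ℝ)*cs^8*ξ₁*ξ₂*(Real.cos θ ^ 2) + (-512/49:ℝ)*cs^8*ξ₁^2*(Real.cos θ ^ 2) + (-33792:ℝ)*cs^9*(Real.cos θ ^ 2)^2*lam^2 + (-78848:ℝ)*cs^9*(Real.cos θ ^ 2)^3 + (-67584/7:ℝ)*cs^9*ξ₅*(Real.cos θ ^ 2)^2 + (5632/49:ℝ)*cs^9*ξ₅^2*(Real.cos θ ^ 2) + (-1024/7:ℝ)*cs^9*ξ₄*(Real.cos θ ^ 2)*lam^2 + (-190464/7:ℝ)*cs^9*ξ₄*(Real.cos θ ^ 2)^2 + (13312/49:ℝ)*cs^9*ξ₄*ξ₅*(Real.cos θ ^ 2) + (1024/49:ℝ)*cs^9*ξ₄^2*(Real.cos θ ^ 2) + (-1536/7:ℝ)*cs^9*ξ₃*(Real.cos θ ^ 2)*lam^2 + (-4608:ℝ)*cs^9*ξ₃*(Real.cos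 θ ^ 2)^2 + (-2560/49:ℝ)*cs^9*ξ₃*ξ₅*(Real.cos θ ^ 2) + (-19968/49:ℝ)*cs^9*ξ₃*ξ₄*(Real.cos θ ^ 2) + (-9728/49:ℝ)*cs^9*ξ₃^2*(Real.cos θ ^ 2) + (-1024/7:ℝ)*cs^9*ξ₂*(Real.cos θ ^ 2)*lam^2 + (-190464/7:ℝ)*cs^9*ξ₂*(Real.cos θ ^ 2)^2 + (13312/49:ℝ)*cs^9*ξ₂*ξ₅*(Real.cos θ ^ 2) + (2048/49:ℝ)*cs^9*ξ₂*ξ₄*(Real.cos θ ^ 2) + (-19968/49:ℝ)*cs^9*ξ₂*ξ₃*(Real.cos θ ^ 2) + (1024/49:ℝ)*cs^9*ξ₂^2*(Real.cos θ ^ 2) + (-67584/7:ℝ)*cs^9*ξ₁*(Real.cos θ ^ 2)^2 + (11264/49:ℝ)*cs^9*ξ₁*ξ₅*(Real.cos θ ^ 2) + (13312/49:ℝ)*cs^9*ξ₁*ξ₄*(Real.cos θ ^ 2) + (-2560/49:ℝ)*cs^9*ξ₁*ξ₃*(Real.cos θ ^ 2) + (13312/49:ℝ)*cs^9*ξ₁*ξ₂*(Real.cos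 θ ^ 2) + (5632/49:ℝ)*cs^9*ξ₁^2*(Real.cos θ ^ 2) + (12288:ℝ)*cs^10*(Real.cos θ ^ 2)^2*lam^2 + (55296:ℝ)*cs^10*(Real.cos θ ^ 2)^3 + (-24576/7:ℝ)*cs^10*ξ₅*(Real.cos θ ^ 2)^2 + (120832/7:ℝ)*cs^10*ξ₄*(Real.cos θ ^ 2)^2 + (-4096/49:ℝ)*cs^10*ξ₄*ξ₅*(Real.cos θ ^ 2) + (-4096/49:ℝ)*cs^10*ξ₄^2*(Real.cos θ ^ 2) + (187392/7:ℝ)*cs^10*ξ₃*(Real.cos θ ^ 2)^2 + (-6144/49:ℝ)*cs^10*ξ₃*ξ₅*(Real.cos θ ^ 2) + (-4096/49:ℝ)*cs^10*ξ₃*ξ₄*(Real.cos θ ^ 2) + (3072/49:ℝ)*cs^10*ξ₃^2*(Real.cos θ ^ 2) + (120832/7:ℝ)*cs^10*ξ₂*(Real.cos θ ^ 2)^2 + (-4096/49:ℝ)*cs^10*ξ₂*ξ₅*(Real.cos θ ^ 2) + (-8192/49:ℝ)*cs^10*ξ₂*ξ₄*(Real.cos θ ^ 2) + (-4096/49:ℝ)*cs^10*ξ₂*ξ₃*(Real.cos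 θ ^ 2) + (-4096/49:ℝ)*cs^10*ξ₂^2*(Real.cos θ ^ 2) + (-24576/7:ℝ)*cs^10*ξ₁*(Real.cos θ ^ 2)^2 + (-4096/49:ℝ)*cs^10*ξ₁*ξ₄*(Real.cos θ ^ 2) + (-6144/49:ℝ)*cs^10*ξ₁*ξ₃*(Real.cos θ ^ 2) + (-4096/49:ℝ)*cs^10*ξ₁*ξ₂*(Real.cos θ ^ 2) + (26624:ℝ)*cs^11*(Real.cos θ ^ 2)^2*lam^2 + (133120:ℝ)*cs^11*(Real.cos θ ^ 2)^3 + (18432:ℝ)*cs^11*ξ₅*(Real.cos θ ^ 2)^2 + (-2048/49:ℝ)*cs^11*ξ₅^2*(Real.cos θ ^ 2) + (292864/7:ℝ)*cs^11*ξ₄*(Real.cos θ ^ 2)^2 + (-4096/49:ℝ)*cs^11*ξ₄*ξ₅*(Real.cos θ ^ 2) + (88064/7:ℝ)*cs^11*ξ₃*(Real.cos θ ^ 2)^2 + (2048/49:ℝ)*cs^11*ξ₃*ξ₅*(Real.cos θ ^ 2) + (8192/49:ℝ)*cs^11*ξ₃*ξ₄*(Real.cos θ ^ 2) + (4096/49:ℝ)*cs^11*ξ₃^2*(Real.cos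 θ ^ 2) + (292864/7:ℝ)*cs^11*ξ₂*(Real.cos θ ^ 2)^2 + (-4096/49:ℝ)*cs^11*ξ₂*ξ₅*(Real.cos θ ^ 2) + (8192/49:ℝ)*cs^11*ξ₂*ξ₃*(Real.cos θ ^ 2) + (18432:ℝ)*cs^11*ξ₁*(Real.cos θ ^ 2)^2 + (-4096/49:ℝ)*cs^11*ξ₁*ξ₅*(Real.cos θ ^ 2) + (-4096/49:ℝ)*cs^11*ξ₁*ξ₄*(Real.cos θ ^ 2) + (2048/49:ℝ)*cs^11*ξ₁*ξ₃*(Real.cos θ ^ 2) + (-4096/49:ℝ)*cs^11*ξ₁*ξ₂*(Real.cos θ ^ 2) + (-2048/49:ℝ)*cs^11*ξ₁^2*(Real.cos θ ^ 2) + (-4096:ℝ)*cs^12*(Real.cos θ ^ 2)^2*lam^2 + (-49152:ℝ)*cs^12*(Real.cos θ ^ 2)^3 + (8192/7:ℝ)*cs^12*ξ₅*(Real.cos θ ^ 2)^2 + (-102400/7:ℝ)*cs^12*ξ₄*(Real.cos θ ^ 2)^2 + (-155648/7:ℝ)*cs^12*ξ₃*(Real.cos θ ^ 2)^2 + (-102400/7:ℝ)*cs^12*ξ₂*(Real.cos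 θ ^ 2)^2 + (8192/7:ℝ)*cs^12*ξ₁*(Real.cos θ ^ 2)^2 + (-8192:ℝ)*cs^13*(Real.cos θ ^ 2)^2*lam^2 + (-106496:ℝ)*cs^13*(Real.cos θ ^ 2)^3 + (-106496/7:ℝ)*cs^13*ξ₅*(Real.cos θ ^ 2)^2 + (-221184/7:ℝ)*cs^13*ξ₄*(Real.cos θ ^ 2)^2 + (-90112/7:ℝ)*cs^13*ξ₃*(Real.cos θ ^ 2)^2 + (-221184/7:ℝ)*cs^13*ξ₂*(Real.cos θ ^ 2)^2 + (-106496/7:ℝ)*cs^13*ξ₁*(Real.cos θ ^ 2)^2 + (16384:ℝ)*cs^14*(Real.cos θ ^ 2)^3 + (32768/7:ℝ)*cs^14*ξ₄*(Real.cos θ ^ 2)^2 + (49152/7:ℝ)*cs^14*ξ₃*(Real.cos θ ^ 2)^2 + (32768/7:ℝ)*cs^14*ξ₂*(Real.cos θ ^ 2)^2 + (32768:ℝ)*cs^15*(Real.cos θ ^ 2)^3 + (32768/7:ℝ)*cs^15*ξ₅*(Real.cos θ ^ 2)^2 + (65536/7:ℝ)*cs^15*ξ₄*(Real.cos θ ^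 2)^2 + (32768/7:ℝ)*cs^15*ξ₃*(Real.cos θ ^ 2)^2 + (65536/7:ℝ)*cs^15*ξ₂*(Real.cos θ ^ 2)^2 + (32768/7:ℝ)*cs^15*ξ₁*(Real.cos θ ^ 2)^2) * hc
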